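/- arXiv:1406.6181 — 3 statements merged into one kernel-verified Lean document; each statement's English description precedes it below -/
import Mathlib

section
/- Let J be an even measurable nonnegative kernel satisfying (J1), and Ω ⊂ ℝᴺ bounded open. Then 𝒟(Ω) = {u : ℝᴺ → ℝ measurable : 𝒥(u,u) < ∞, u ≡ 0 on ℝᴺ \ Ω}, equipped with the scalar product 𝒥, is a Hilbert space (i.e., it is complete). -/
open MeasureTheory ENNReal Set Filter

/-- The quadratic form `𝒥(u,u) = (1/2)∬ (u(x)-u(y))² J(x-y) dx dy`. -/
noncomputable def Jquad (N : ℕ) (J : EuclideanSpace ℝ (Fin N) → ℝ)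
    (u : EuclideanSpace ℝ (Fin N) → ℝ) : ℝ≥0∞ :=
  (1 / 2 : ℝ≥0∞) * ∫⁻ x, ∫⁻ y, ENNReal.ofReal ((u x - u y) ^ 2 * J (x - y))

/-- The form domain `𝒟(Ω)`. -/
def calD (N : ℕ) (J : EuclideanSpace ℝ (Fin N) → ℝ)
    (Ω : Set (EuclideanSpace ℝ (Fin N))) : Set (EuclideanSpace ℝ (Fin N) → ℝ) :=
  {u | Measurable u ∧ Jquad N J u < ⊤ ∧ ∀ x ∉ Ω, u x = 0}

namespace CalDAux

/-- The set where a sequence of measurable real functions is Cauchy is measurable. -/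
lemma measurableSet_cauchy {α : Type*} [MeasurableSpace α] {F : ℕ → α → ℝ}
    (hF : ∀ k, Measurable (F k)) : MeasurableSet {a | CauchySeq fun k => F k a} := by
  have hset : {a | CauchySeq fun k => F k a} =
      ⋂ j : ℕ, ⋃ M : ℕ, ⋂ n : ℕ, ⋂ _ : n ≥ M, {a | |F n a - F M a| < 1 / (j + 1)} := by
    ext a
    simp only [mem_setOf_eq, mem_iInter, mem_iUnion]
    constructor
    · intro h j
      rcases Metric.cauchySeq_iff'.1 h (1 / (j + 1)) (by positivity) with ⟨M, hM⟩
      exact ⟨M, fun n hn => by simpa [Real.dist_eq] using hM n hn⟩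
    · intro h
      refine Metric.cauchySeq_iff'.2 fun ε hε => ?_
      rcases exists_nat_one_div_lt hε with ⟨j, hj⟩
      rcases h j with ⟨M, hM⟩
      exact ⟨M, fun n hn => lt_trans (by simpa [Real.dist_eq] using hM n hn) hj⟩
  rw [hset]
  refine MeasurableSet.iInter fun j => MeasurableSet.iUnion fun M =>
    MeasurableSet.iInter fun n => MeasurableSet.iInter fun _ => ?_
  exact measurableSet_lt (((hF n).sub (hF M)).abs) measurable_const

/-- Fubini-type null-set gluing along an intermediate point. -/
lemma glue {Y : Type*} [MeasurableSpace Y] (μ : Measure Y) [SFinite μ]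
    {bad T₁ T₂ T₃ : Set (Y × Y)}
    (htrans : ∀ x y z, (x, y) ∉ bad → (y, z) ∉ bad → (x, z) ∉ bad)
    (h₁ : μ.prod μ (bad ∩ T₁) = 0) (h₂ : μ.prod μ (bad ∩ T₂) = 0)
    (h₃ : ∀ q ∈ T₃, 0 < μ {y | (q.1, y) ∈ T₁ ∧ (y, q.2) ∈ T₂}) :
    μ.prod μ (bad ∩ T₃) = 0 := by
  have h₂' : μ.prod μ (Prod.swap ⁻¹' (bad ∩ T₂)) = 0 := by
    set t := toMeasurable (μ.prod μ) (bad ∩ T₂) with ht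
    have htm : MeasurableSet t := measurableSet_toMeasurable _ _
    have htnull : μ.prod μ t = 0 := by
      rw [measure_toMeasurable]; exact h₂
    have : μ.prod μ (Prod.swap ⁻¹' t) = 0 := by
      have hswap := Measure.prod_swap (μ := μ) (ν := μ)
      calc μ.prod μ (Prod.swap ⁻¹' t)
          = Measure.map Prod.swap (μ.prod μ) t := by
            rw [Measure.map_apply measurable_swap htm]
        _ = μ.prod μ t := by rw [hswap]
        _ = 0 := htnull
    exact measure_mono_null (preimage_mono (subset_toMeasurable _ _)) this
  have hae₁ : ∀ᵐ x ∂μ, μ {y | (x, y) ∈ bad ∩ T₁} = 0 := by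
    simpa [Set.preimage, Filter.EventuallyEq] using Measure.measure_ae_null_of_prod_null h₁
  have hae₂ : ∀ᵐ z ∂μ, μ {y | (y, z) ∈ bad ∩ T₂} = 0 := by
    have := Measure.measure_ae_null_of_prod_null h₂'
    simpa [Set.preimage, Prod.swap, Filter.EventuallyEq] using this
  obtain ⟨G₁, hG₁sub, hG₁m, hG₁null⟩ :
      ∃ G₁, {x | ¬ μ {y | (x, y) ∈ bad ∩ T₁} = 0} ⊆ G₁ ∧ MeasurableSet G₁ ∧ μ G₁ = 0 :=
    exists_measurable_superset_of_null hae₁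
  obtain ⟨G₂, hG₂sub, hG₂m, hG₂null⟩ :
      ∃ G₂, {z | ¬ μ {y | (y, z) ∈ bad ∩ T₂} = 0} ⊆ G₂ ∧ MeasurableSet G₂ ∧ μ G₂ = 0 :=
    exists_measurable_superset_of_null hae₂
  have hsub : bad ∩ T₃ ⊆ (G₁ ×ˢ (univ : Set Y)) ∪ ((univ : Set Y) ×ˢ G₂) := by
    rintro ⟨x, z⟩ ⟨hbad, hT₃⟩
    by_contra hq
    simp only [mem_union, mem_prod, mem_univ, and_true, true_and, not_or] at hq
    obtain ⟨hx, hz⟩ := hq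
    have hx0 : μ {y | (x, y) ∈ bad ∩ T₁} = 0 := by
      by_contra h; exact hx (hG₁sub h)
    have hz0 : μ {y | (y, z) ∈ bad ∩ T₂} = 0 := by
      by_contra h; exact hz (hG₂sub h)
    have hpos := h₃ (x, z) hT₃
    have hdiff : 0 < μ ({y | (x, y) ∈ T₁ ∧ (y, z) ∈ T₂} \
        ({y | (x, y) ∈ bad ∩ T₁} ∪ {y | (y, z) ∈ bad ∩ T₂})) := by
      have hU : μ ({y | (x, y) ∈ bad ∩ T₁} ∪ {y | (y, z) ∈ bad ∩ T₂}) = 0 :=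
        le_antisymm (le_trans (measure_union_le _ _) (by rw [hx0, hz0]; simp)) zero_le
      calc (0 : ℝ≥0∞) < μ {y | (x, y) ∈ T₁ ∧ (y, z) ∈ T₂} := hpos
        _ ≤ μ ({y | (x, y) ∈ T₁ ∧ (y, z) ∈ T₂} \
            ({y | (x, y) ∈ bad ∩ T₁} ∪ {y | (y, z) ∈ bad ∩ T₂})) := by
            rw [measure_diff_null hU]
    obtain ⟨y, ⟨hyT₁, hyT₂⟩, hyn⟩ := nonempty_of_measure_ne_zero hdiff.ne'
    have hxy : (x, y) ∉ bad := fun h => hyn (Or.inl ⟨h, hyT₁⟩)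
    have hyz : (y, z) ∉ bad := fun h => hyn (Or.inr ⟨h, hyT₂⟩)
    exact htrans x y z hxy hyz hbad
  refine measure_mono_null hsub ?_
  refine le_antisymm (le_trans (measure_union_le _ _) ?_) zero_le
  have e1 : μ.prod μ (G₁ ×ˢ (univ : Set Y)) = 0 := by
    rw [Measure.prod_prod, hG₁null, zero_mul]
  have e2 : μ.prod μ ((univ : Set Y) ×ˢ G₂) = 0 := by
    rw [Measure.prod_prod, hG₂null, mul_zero]
  rw [e1, e2]; simp

lemma ae_prod_mk {Y : Type*} [MeasurableSpace Y] (μ : Measure Y) [SFinite μ] {P : Y → Prop}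
    (h : ∀ᵐ x ∂μ, P x) : ∀ᵐ q ∂(μ.prod μ), P q.1 ∧ P q.2 := by
  rw [ae_iff] at h ⊢
  set T := toMeasurable μ {x | ¬ P x} with hT
  have hTnull : μ T = 0 := by rw [measure_toMeasurable]; exact h
  have hsub : {q : Y × Y | ¬ (P q.1 ∧ P q.2)} ⊆ (T ×ˢ univ) ∪ (univ ×ˢ T) := by
    rintro ⟨x, y⟩ hq
    simp only [mem_setOf_eq, not_and_or] at hq
    rcases hq with h1 | h2
    · exact Or.inl ⟨subset_toMeasurable _ _ h1, mem_univ _⟩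
    · exact Or.inr ⟨mem_univ _, subset_toMeasurable _ _ h2⟩
  refine measure_mono_null hsub ?_
  refine le_antisymm (le_trans (measure_union_le _ _) ?_) zero_le
  rw [Measure.prod_prod, Measure.prod_prod, hTnull]
  simp

variable {N : ℕ} {J : EuclideanSpace ℝ (Fin N) → ℝ}

lemma integrand_measurable (hJ : Measurable J)
    {f g : EuclideanSpace ℝ (Fin N) → ℝ} (hf : Measurable f) (hg : Measurable g) :
    Measurable (fun q : EuclideanSpace ℝ (Fin N) × EuclideanSpace ℝ (Fin N) =>
      ENNReal.ofReal ((f q.1 - g q.2) ^ 2 * J (q.1 - q.2))) := by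
  apply ENNReal.measurable_ofReal.comp
  exact (((hf.comp measurable_fst).sub (hg.comp measurable_snd)).pow_const 2).mul
    (hJ.comp (measurable_fst.sub measurable_snd))

lemma Jquad_eq_prod (hJ : Measurable J)
    {w : EuclideanSpace ℝ (Fin N) → ℝ} (hw : Measurable w) :
    Jquad N J w = (1 / 2 : ℝ≥0∞) *
      ∫⁻ q : EuclideanSpace ℝ (Fin N) × EuclideanSpace ℝ (Fin N),
        ENNReal.ofReal ((w q.1 - w q.2) ^ 2 * J (q.1 - q.2)) ∂(volume.prod volume) := by
  rw [Jquad, lintegral_prod _ (integrand_measurable hJ hw hw).aemeasurable]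

lemma Jquad_neg (w : EuclideanSpace ℝ (Fin N) → ℝ) : Jquad N J (-w) = Jquad N J w := by
  unfold Jquad
  congr 1
  refine lintegral_congr fun x => lintegral_congr fun y => ?_
  congr 1
  simp only [Pi.neg_apply]
  ring

lemma Jquad_add_lt_top (hJ : Measurable J)
    {f g : EuclideanSpace ℝ (Fin N) → ℝ} (hf : Measurable f) (hg : Measurable g)
    (hft : Jquad N J f < ⊤) (hgt : Jquad N J g < ⊤) : Jquad N J (f + g) < ⊤ := by
  set μ := (volume :
    Measure (EuclideanSpace ℝ (Fin N))).prod (volume : Measure (EuclideanSpace ℝ (Fin N)))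
  set F : (EuclideanSpace ℝ (Fin N) → ℝ) →
      (EuclideanSpace ℝ (Fin N) × EuclideanSpace ℝ (Fin N)) → ℝ≥0∞ :=
    fun w q => ENNReal.ofReal (|w q.1 - w q.2|) *
      ENNReal.ofReal (J (q.1 - q.2)) ^ ((2 : ℝ)⁻¹) with hF
  have hFsq : ∀ (w : EuclideanSpace ℝ (Fin N) → ℝ) q,
      (F w q) ^ (2 : ℝ) = ENNReal.ofReal ((w q.1 - w q.2) ^ 2 * J (q.1 - q.2)) := by
    intro w q
    rw [hF]
    rw [ENNReal.mul_rpow_of_nonneg _ _ (by norm_num : (0:ℝ) ≤ 2),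
      ← ENNReal.rpow_mul, ENNReal.ofReal_mul (sq_nonneg _)]
    congr 1
    · rw [ENNReal.ofReal_rpow_of_nonneg (abs_nonneg _) (by norm_num : (0:ℝ) ≤ 2)]
      congr 1
      rw [show ((2:ℝ)) = ((2:ℕ):ℝ) by norm_num, Real.rpow_natCast, sq_abs]
    · norm_num
  have hFmeas : ∀ (w : EuclideanSpace ℝ (Fin N) → ℝ), Measurable w → AEMeasurable (F w) μ := by
    intro w hw
    refine Measurable.aemeasurable ?_
    apply Measurable.mul
    · exact ENNReal.measurable_ofReal.comp
        (((hw.comp measurable_fst).sub (hw.comp measurable_snd)).abs)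
    · exact (ENNReal.measurable_ofReal.comp (hJ.comp (measurable_fst.sub measurable_snd))).pow_const _
  have hsub : ∀ q, F (f + g) q ≤ F f q + F g q := by
    intro q
    rw [hF]
    simp only [Pi.add_apply]
    rw [← add_mul]
    refine mul_le_mul_left ?_ _
    rw [← ENNReal.ofReal_add (abs_nonneg _) (abs_nonneg _)]
    refine ENNReal.ofReal_le_ofReal ?_
    have : f q.1 + g q.1 - (f q.2 + g q.2) = (f q.1 - f q.2) + (g q.1 - g q.2) := by ring
    rw [this]
    exact abs_add_le _ _
  set A := ∫⁻ q, F f q ^ (2 : ℝ) ∂μ with hA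
  set B := ∫⁻ q, F g q ^ (2 : ℝ) ∂μ with hB
  set C := ∫⁻ q, F (f + g) q ^ (2 : ℝ) ∂μ with hC
  have hJf : Jquad N J f = (1/2 : ℝ≥0∞) * A := by
    rw [Jquad_eq_prod hJ hf, hA]
    congr 1
    exact (lintegral_congr fun q => (hFsq f q)).symm
  have hJg : Jquad N J g = (1/2 : ℝ≥0∞) * B := by
    rw [Jquad_eq_prod hJ hg, hB]
    congr 1
    exact (lintegral_congr fun q => (hFsq g q)).symm
  have hJfg : Jquad N J (f + g) = (1/2 : ℝ≥0∞) * C := by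
    rw [Jquad_eq_prod hJ (w := f + g) (hf.add hg), hC]
    congr 1
    exact (lintegral_congr fun q => (hFsq (f + g) q)).symm
  have hAfin : A ≠ ⊤ := by
    intro h
    rw [hJf, h] at hft
    simp [ENNReal.mul_top] at hft
  have hBfin : B ≠ ⊤ := by
    intro h
    rw [hJg, h] at hgt
    simp [ENNReal.mul_top] at hgt
  have key : C ^ ((1:ℝ)/2) ≤ A ^ ((1:ℝ)/2) + B ^ ((1:ℝ)/2) := by
    have h1 : C ≤ ∫⁻ q, (F f + F g) q ^ (2:ℝ) ∂μ :=
      lintegral_mono fun q => ENNReal.rpow_le_rpow (hsub q) (by norm_num)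
    calc C ^ ((1:ℝ)/2) ≤ (∫⁻ q, (F f + F g) q ^ (2:ℝ) ∂μ) ^ ((1:ℝ)/2) :=
          ENNReal.rpow_le_rpow h1 (by norm_num)
      _ ≤ (∫⁻ q, F f q ^ (2:ℝ) ∂μ) ^ ((1:ℝ)/2) + (∫⁻ q, F g q ^ (2:ℝ) ∂μ) ^ ((1:ℝ)/2) :=
          ENNReal.lintegral_Lp_add_le (hFmeas f hf) (hFmeas g hg) (by norm_num)
      _ = A ^ ((1:ℝ)/2) + B ^ ((1:ℝ)/2) := rfl
  have hCfin : C < ⊤ := by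
    have hrhs : A ^ ((1:ℝ)/2) + B ^ ((1:ℝ)/2) < ⊤ := by
      refine ENNReal.add_lt_top.2 ⟨?_, ?_⟩ <;>
        exact ENNReal.rpow_lt_top_of_nonneg (by norm_num) (by assumption)
    have h2 : C = (C ^ ((1:ℝ)/2)) ^ (2:ℝ) := by
      rw [← ENNReal.rpow_mul]
      norm_num
    rw [h2]
    exact ENNReal.rpow_lt_top_of_nonneg (by norm_num) (lt_of_le_of_lt key hrhs).ne
  rw [hJfg]
  exact ENNReal.mul_lt_top (by norm_num) hCfin

/-- Quantitative overlapping of translates of a set of large density in a ball. -/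
lemma overlap {N : ℕ} {S₀ : Set (EuclideanSpace ℝ (Fin N))}
    (p : EuclideanSpace ℝ (Fin N)) (r c : ℝ) (hr : 0 < r) (hc0 : 0 < c) (hc1 : c < 1)
    (hcN : (1/2 : ℝ) ≤ (1 - c) ^ N)
    (hS₀ : volume (Metric.closedBall p r \ S₀) ≤ 8⁻¹ * volume (Metric.closedBall p r))
    {w : EuclideanSpace ℝ (Fin N)} (hw : ‖w‖ ≤ c * r) :
    0 < volume (S₀ ∩ ((fun y => y - w) ⁻¹' S₀)) := by
  set B := Metric.closedBall p r with hB
  set vB := volume B with hvB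
  have hvB0 : vB ≠ 0 := (Metric.measure_closedBall_pos volume p hr).ne'
  have hvBtop : vB ≠ ⊤ := measure_closedBall_lt_top.ne
  set E := Metric.closedBall p ((1 - c) * r) with hE
  have h1c : (0:ℝ) ≤ 1 - c := by linarith
  have hEB : E ⊆ B := Metric.closedBall_subset_closedBall (by nlinarith)
  have hEwB : E ⊆ (fun y => y - w) ⁻¹' B := by
    intro x hx
    simp only [Set.mem_preimage, hB, Metric.mem_closedBall]
    have hxw : dist (x - w) x = ‖w‖ := by
      rw [dist_eq_norm]; simp
    calc dist (x - w) p ≤ dist (x - w) x + dist x p := dist_triangle _ _ _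
      _ ≤ ‖w‖ + (1 - c) * r := by
          rw [hxw]
          exact add_le_add_right hx _
      _ ≤ c * r + (1 - c) * r := by linarith
      _ = r := by ring
  have hcover : E ⊆ (S₀ ∩ ((fun y => y - w) ⁻¹' S₀)) ∪ ((B \ S₀) ∪ ((fun y => y - w) ⁻¹' (B \ S₀))) := by
    intro x hx
    by_cases h1 : x ∈ S₀
    · by_cases h2 : x - w ∈ S₀
      · exact Or.inl ⟨h1, h2⟩
      · exact Or.inr (Or.inr ⟨hEwB hx, h2⟩)
    · exact Or.inr (Or.inl ⟨hEB hx, h1⟩)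
  have htrans : volume ((fun y => y - w) ⁻¹' (B \ S₀)) = volume (B \ S₀) := by
    have : (fun y : EuclideanSpace ℝ (Fin N) => y - w) = fun y => y + (-w) := by
      funext y; rw [sub_eq_add_neg]
    rw [this]
    exact measure_preimage_add_right volume (-w) (B \ S₀)
  have hEvol : vB ≤ 2 * volume E := by
    have h1 := Measure.addHaar_closedBall (volume : Measure (EuclideanSpace ℝ (Fin N))) p hr.le
    have h2 := Measure.addHaar_closedBall (volume : Measure (EuclideanSpace ℝ (Fin N))) p
      (mul_nonneg h1c hr.le)
    rw [hvB, hB, h1, hE, h2, finrank_euclideanSpace_fin, ← mul_assoc]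
    refine mul_le_mul_left ?_ _
    have : (2 : ℝ≥0∞) * ENNReal.ofReal (((1 - c) * r) ^ N)
        = ENNReal.ofReal (2 * ((1 - c) * r) ^ N) := by
      rw [ENNReal.ofReal_mul (by norm_num : (0:ℝ) ≤ 2)]
      norm_num
    rw [this]
    refine ENNReal.ofReal_le_ofReal ?_
    rw [mul_pow]
    nlinarith [pow_nonneg hr.le N, pow_nonneg h1c N]
  by_contra h0
  push_neg at h0
  have ha : volume (S₀ ∩ ((fun y => y - w) ⁻¹' S₀)) = 0 := le_antisymm h0 zero_le
  have hEle : volume E ≤ 4⁻¹ * vB := by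
    calc volume E ≤ volume (S₀ ∩ ((fun y => y - w) ⁻¹' S₀)) +
        volume ((B \ S₀) ∪ ((fun y => y - w) ⁻¹' (B \ S₀))) :=
          le_trans (measure_mono hcover) (measure_union_le _ _)
      _ ≤ 0 + (volume (B \ S₀) + volume ((fun y => y - w) ⁻¹' (B \ S₀))) := by
          rw [ha]; exact add_le_add_right (measure_union_le _ _) _
      _ ≤ 8⁻¹ * vB + 8⁻¹ * vB := by
          rw [zero_add, htrans]
          exact add_le_add hS₀ hS₀
      _ = 4⁻¹ * vB := by
          rw [← add_mul]
          congr 1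
          rw [← ENNReal.ofReal_ofNat 8, ← ENNReal.ofReal_ofNat 4,
            ← ENNReal.ofReal_inv_of_pos (by norm_num), ← ENNReal.ofReal_inv_of_pos (by norm_num),
            ← ENNReal.ofReal_add (by norm_num) (by norm_num)]
          norm_num
  have hfin : vB ≤ 2⁻¹ * vB := by
    calc vB ≤ 2 * volume E := hEvol
      _ ≤ 2 * (4⁻¹ * vB) := mul_le_mul_right hEle _
      _ = 2⁻¹ * vB := by
          rw [← mul_assoc]
          congr 1
          rw [← ENNReal.ofReal_ofNat 4, ← ENNReal.ofReal_ofNat 2,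
            ← ENNReal.ofReal_inv_of_pos (by norm_num), ← ENNReal.ofReal_inv_of_pos (by norm_num),
            ← ENNReal.ofReal_mul (by norm_num)]
          norm_num
  have hlt : 2⁻¹ * vB < vB := by
    rw [mul_comm, show vB * 2⁻¹ = vB / 2 from (div_eq_mul_inv vB 2).symm]
    exact ENNReal.half_lt_self hvB0 hvBtop
  exact absurd (lt_of_le_of_lt hfin hlt) (lt_irrefl _)

end CalDAux

open CalDAux in
set_option maxHeartbeats 1000000 in
/-- Completeness of `𝒟(Ω)` with respect to the scalar product `𝒥`: every
`𝒥`-Cauchy sequence in `𝒟(Ω)` converges in the `𝒥`-energy to some element of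
`𝒟(Ω)`. -/
theorem calD_complete
    (N : ℕ) (J : EuclideanSpace ℝ (Fin N) → ℝ)
    (hJmeas : Measurable J) (hJnonneg : ∀ z, 0 ≤ J z)
    (hJeven : ∀ z, J (-z) = J z)
    (hJ1a : ∫⁻ z in {z | 1 ≤ ‖z‖}, ENNReal.ofReal (J z) < ⊤)
    (hJ1b : ∫⁻ z in {z | ‖z‖ ≤ 1}, ENNReal.ofReal (‖z‖ ^ 2 * J z) < ⊤)
    (hJinf : ∫⁻ z, ENNReal.ofReal (J z) = ⊤)
    (Ω : Set (EuclideanSpace ℝ (Fin N)))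
    (hΩo : IsOpen Ω) (hΩb : Bornology.IsBounded Ω)
    (u : ℕ → EuclideanSpace ℝ (Fin N) → ℝ)
    (hu : ∀ n, u n ∈ calD N J Ω)
    (hCauchy : ∀ ε > (0 : ℝ), ∃ M : ℕ, ∀ m ≥ M, ∀ n ≥ M,
      Jquad N J (u m - u n) < ENNReal.ofReal ε) :
    ∃ v ∈ calD N J Ω,
      Tendsto (fun n => Jquad N J (u n - v)) atTop (nhds 0) := by
  classical
  -- Part 0 : N ≥ 1
  have hN : 0 < N := by
    by_contra h
    push_neg at h
    have hN0 : N = 0 := Nat.le_zero.mp (Nat.lt_succ_iff.mp (Nat.lt_succ_of_le h))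
    subst hN0
    have hsub : ∀ z : EuclideanSpace ℝ (Fin 0), z = 0 := by
      intro z
      ext i
      exact absurd i.2 (by simp)
    have huniv : (volume : Measure (EuclideanSpace ℝ (Fin 0))) Set.univ = 1 := by
      rw [← ((EuclideanSpace.volume_preserving_symm_measurableEquiv_toLp (Fin 0)).symm).measure_preimage
        (by simp)]
      simp [MeasureTheory.volume_pi, MeasureTheory.Measure.pi_univ]
    have : ∫⁻ z : EuclideanSpace ℝ (Fin 0), ENNReal.ofReal (J z) = ENNReal.ofReal (J 0) := by
      rw [show (fun z : EuclideanSpace ℝ (Fin 0) => ENNReal.ofReal (J z))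
        = fun _ => ENNReal.ofReal (J 0) from funext fun z => by rw [hsub z]]
      rw [lintegral_const, huniv, mul_one]
    rw [this] at hJinf
    exact ENNReal.ofReal_ne_top hJinf
  -- Part 1 : basic facts about the sequence
  have hum : ∀ n, Measurable (u n) := fun n => (hu n).1
  have huf : ∀ n, Jquad N J (u n) < ⊤ := fun n => (hu n).2.1
  have huz : ∀ n, ∀ x ∉ Ω, u n x = 0 := fun n => (hu n).2.2
  -- Part 2 : the set S of positivity of J near the origin has positive measure
  have hcB : ∫⁻ z in Metric.closedBall (0 : EuclideanSpace ℝ (Fin N)) 1,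
      ENNReal.ofReal (J z) = ⊤ := by
    by_contra h
    have hcover : (Set.univ : Set (EuclideanSpace ℝ (Fin N)))
        ⊆ Metric.closedBall 0 1 ∪ {z | 1 ≤ ‖z‖} := by
      intro z _
      rcases le_total ‖z‖ 1 with h1 | h1
      · exact Or.inl (by simpa [Metric.mem_closedBall, dist_zero_right] using h1)
      · exact Or.inr h1
    have hle : (⊤ : ℝ≥0∞) ≤
        (∫⁻ z in Metric.closedBall (0 : EuclideanSpace ℝ (Fin N)) 1, ENNReal.ofReal (J z)) +
        ∫⁻ z in {z | 1 ≤ ‖z‖}, ENNReal.ofReal (J z) := by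
      rw [← hJinf]
      calc ∫⁻ z, ENNReal.ofReal (J z)
          = ∫⁻ z in (Set.univ : Set (EuclideanSpace ℝ (Fin N))), ENNReal.ofReal (J z) := by
            rw [Measure.restrict_univ]
        _ ≤ ∫⁻ z in Metric.closedBall (0 : EuclideanSpace ℝ (Fin N)) 1 ∪ {z | 1 ≤ ‖z‖},
              ENNReal.ofReal (J z) := lintegral_mono_set hcover
        _ ≤ _ := by
            rw [← lintegral_add_measure]
            exact lintegral_mono' (Measure.restrict_union_le _ _) le_rfl
    have : ((∫⁻ z in Metric.closedBall (0 : EuclideanSpace ℝ (Fin N)) 1, ENNReal.ofReal (J z)) +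
        ∫⁻ z in {z | 1 ≤ ‖z‖}, ENNReal.ofReal (J z)) < ⊤ :=
      ENNReal.add_lt_top.2 ⟨lt_top_iff_ne_top.2 h, hJ1a⟩
    exact absurd (lt_of_le_of_lt hle this) (lt_irrefl _)
  set S : Set (EuclideanSpace ℝ (Fin N)) :=
    {z | 0 < J z} ∩ Metric.closedBall 0 1 with hSdef
  have hSm : MeasurableSet S :=
    (measurableSet_lt measurable_const hJmeas).inter Metric.isClosed_closedBall.measurableSet
  have hSpos : 0 < volume S := by
    rcases eq_zero_or_pos (volume S) with h0 | h
    · exfalso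
      have hzero : ∫⁻ z in Metric.closedBall (0 : EuclideanSpace ℝ (Fin N)) 1,
          ENNReal.ofReal (J z) = 0 := by
        have hsplit : Metric.closedBall (0 : EuclideanSpace ℝ (Fin N)) 1 ⊆
            S ∪ (Metric.closedBall 0 1 \ {z | 0 < J z}) := by
          intro z hz
          by_cases hj : 0 < J z
          · exact Or.inl ⟨hj, hz⟩
          · exact Or.inr ⟨hz, hj⟩
        have h1 : ∫⁻ z in S, ENNReal.ofReal (J z) = 0 := by
          rw [setLIntegral_measure_zero _ _ h0]
        have h2 : ∫⁻ z in Metric.closedBall (0 : EuclideanSpace ℝ (Fin N)) 1 \ {z | 0 < J z},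
            ENNReal.ofReal (J z) = 0 := by
          have hm : MeasurableSet (Metric.closedBall (0 : EuclideanSpace ℝ (Fin N)) 1
              \ {z | 0 < J z}) :=
            Metric.isClosed_closedBall.measurableSet.diff (measurableSet_lt measurable_const hJmeas)
          rw [show (fun z : EuclideanSpace ℝ (Fin N) => ENNReal.ofReal (J z))
            = ENNReal.ofReal ∘ J from rfl,
            setLIntegral_eq_zero_iff hm (ENNReal.measurable_ofReal.comp hJmeas)]
          refine ae_of_all _ fun z hz => ?_
          exact ENNReal.ofReal_eq_zero.2 (not_lt.mp hz.2)
        refine le_antisymm ?_ zero_le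
        calc ∫⁻ z in Metric.closedBall (0 : EuclideanSpace ℝ (Fin N)) 1, ENNReal.ofReal (J z)
            ≤ ∫⁻ z in S ∪ (Metric.closedBall (0 : EuclideanSpace ℝ (Fin N)) 1 \ {z | 0 < J z}),
              ENNReal.ofReal (J z) := lintegral_mono_set hsplit
          _ ≤ (∫⁻ z in S, ENNReal.ofReal (J z)) +
              ∫⁻ z in Metric.closedBall (0 : EuclideanSpace ℝ (Fin N)) 1 \ {z | 0 < J z},
              ENNReal.ofReal (J z) := by
              rw [← lintegral_add_measure]
              exact lintegral_mono' (Measure.restrict_union_le _ _) le_rfl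
          _ = 0 := by rw [h1, h2]; simp
      rw [hzero] at hcB
      simp at hcB
    · exact h
  have hSsymm : ∀ z, z ∈ S → -z ∈ S := by
    intro z hz
    exact ⟨by simpa [hJeven z] using hz.1, by simpa [dist_zero_right] using
      (by simpa [dist_zero_right, norm_neg] using hz.2 : ‖z‖ ≤ 1)⟩
  -- Part 2b : a ball where S has density ≥ 7/8
  obtain ⟨p, r, hr0, hS₀dens⟩ : ∃ (p : EuclideanSpace ℝ (Fin N)) (r : ℝ), 0 < r ∧
      volume (Metric.closedBall p r \ (S ∩ Metric.closedBall p r))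
        ≤ 8⁻¹ * volume (Metric.closedBall p r) := by
    have hres : (volume.restrict S) ≠ 0 := by
      intro h
      have := congrArg (fun m : Measure (EuclideanSpace ℝ (Fin N)) => m Set.univ) h
      simp only [Measure.restrict_apply_univ, Measure.coe_zero, Pi.zero_apply] at this
      exact hSpos.ne' this
    haveI : (ae (volume.restrict S)).NeBot := ae_neBot.mpr hres
    obtain ⟨p, hp⟩ := (Besicovitch.ae_tendsto_measure_inter_div volume S).exists
    have hev : ∀ᶠ r in nhdsWithin (0:ℝ) (Set.Ioi 0),
        7/8 < volume (S ∩ Metric.closedBall p r) / volume (Metric.closedBall p r) :=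
      hp (eventually_gt_nhds (by
        rw [ENNReal.div_lt_iff (Or.inl (by norm_num)) (Or.inl (by norm_num))]
        norm_num : (7/8 : ℝ≥0∞) < 1))
    obtain ⟨r, hratio, hr⟩ := (hev.and eventually_mem_nhdsWithin).exists
    refine ⟨p, r, hr, ?_⟩
    have hBtop : volume (Metric.closedBall p r) ≠ ⊤ := measure_closedBall_lt_top.ne
    have hmul : 7/8 * volume (Metric.closedBall p r) ≤ volume (S ∩ Metric.closedBall p r) := by
      have := ENNReal.mul_lt_of_lt_div hratio
      exact this.le
    have hdiff : volume (Metric.closedBall p r \ (S ∩ Metric.closedBall p r))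
        = volume (Metric.closedBall p r) - volume (S ∩ Metric.closedBall p r) := by
      refine measure_diff inter_subset_right (hSm.inter Metric.isClosed_closedBall.measurableSet).nullMeasurableSet ?_
      exact ne_top_of_le_ne_top hBtop (measure_mono inter_subset_right)
    rw [hdiff]
    refine tsub_le_iff_right.2 ?_
    calc volume (Metric.closedBall p r)
        = (8⁻¹ + 7/8) * volume (Metric.closedBall p r) := by
          congr 1
          rw [← ENNReal.ofReal_ofNat 8, ← ENNReal.ofReal_ofNat 7,
            ← ENNReal.ofReal_inv_of_pos (by norm_num),
            ← ENNReal.ofReal_div_of_pos (by norm_num),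
            ← ENNReal.ofReal_add (by norm_num) (by norm_num)]
          norm_num
      _ = 8⁻¹ * volume (Metric.closedBall p r) + 7/8 * volume (Metric.closedBall p r) := by
          rw [add_mul]
      _ ≤ 8⁻¹ * volume (Metric.closedBall p r) + volume (S ∩ Metric.closedBall p r) :=
          add_le_add_right hmul _
  set S₀ : Set (EuclideanSpace ℝ (Fin N)) := S ∩ Metric.closedBall p r with hS₀def
  -- Part 2c : the constant c
  obtain ⟨c, hc0, hc1, hcN⟩ : ∃ c : ℝ, 0 < c ∧ c < 1 ∧ (1/2 : ℝ) ≤ (1 - c) ^ N := by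
    refine ⟨1 - (2:ℝ) ^ (-(N:ℝ)⁻¹), ?_, ?_, ?_⟩
    · have : (2:ℝ) ^ (-(N:ℝ)⁻¹) < 1 := by
        apply Real.rpow_lt_one_of_one_lt_of_neg (by norm_num)
        simp only [neg_neg, Left.neg_neg_iff]
        positivity
      linarith
    · have : (0:ℝ) < (2:ℝ) ^ (-(N:ℝ)⁻¹) := Real.rpow_pos_of_pos (by norm_num) _
      linarith
    · have h1 : (1 : ℝ) - (1 - (2:ℝ) ^ (-(N:ℝ)⁻¹)) = (2:ℝ) ^ (-(N:ℝ)⁻¹) := by ring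
      rw [h1, ← Real.rpow_natCast ((2:ℝ) ^ (-(N:ℝ)⁻¹)) N, ← Real.rpow_mul (by norm_num)]
      rw [show -(N:ℝ)⁻¹ * N = -1 by
        field_simp]
      norm_num
  -- Part 3 : rapidly Cauchy subsequence
  choose M hM using fun k : ℕ => hCauchy ((8:ℝ)⁻¹ ^ k) (by positivity)
  set φ : ℕ → ℕ := fun k => Nat.rec (M 0) (fun k ih => max (M (k+1)) (ih + 1)) k with hφdef
  have hφ_succ : ∀ k, φ (k+1) = max (M (k+1)) (φ k + 1) := fun k => rfl
  have hφmono : StrictMono φ := strictMono_nat_of_lt_succ fun k => by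
    rw [hφ_succ]
    exact lt_of_lt_of_le (Nat.lt_succ_self _) (le_max_right _ _)
  have hφM : ∀ k, M k ≤ φ k := by
    intro k
    cases k with
    | zero => exact le_refl _
    | succ k => rw [hφ_succ]; exact le_max_left _ _
  have hφspec : ∀ k m n, φ k ≤ m → φ k ≤ n →
      Jquad N J (u m - u n) < ENNReal.ofReal ((8:ℝ)⁻¹ ^ k) :=
    fun k m n hm hn => hM k m (le_trans (hφM k) hm) n (le_trans (hφM k) hn)
  set U : ℕ → EuclideanSpace ℝ (Fin N) → ℝ := fun k => u (φ k) with hUdef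
  have hUm : ∀ k, Measurable (U k) := fun k => hum (φ k)
  -- Part 4 : Borel-Cantelli for the weighted measure ρ
  set μ2 := (volume : Measure (EuclideanSpace ℝ (Fin N))).prod
    (volume : Measure (EuclideanSpace ℝ (Fin N))) with hμ2def
  set dens : EuclideanSpace ℝ (Fin N) × EuclideanSpace ℝ (Fin N) → ℝ≥0∞ :=
    fun q => ENNReal.ofReal (J (q.1 - q.2)) with hdensdef
  have hdensm : Measurable dens :=
    ENNReal.measurable_ofReal.comp (hJmeas.comp (measurable_fst.sub measurable_snd))
  set ρ := μ2.withDensity dens with hρdef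
  have hmeas_sq : ∀ w : EuclideanSpace ℝ (Fin N) → ℝ, Measurable w →
      Measurable (fun q : EuclideanSpace ℝ (Fin N) × EuclideanSpace ℝ (Fin N) =>
        ENNReal.ofReal ((w q.1 - w q.2) ^ 2)) := by
    intro w hw
    apply Measurable.ennreal_ofReal
    exact ((hw.comp measurable_fst).sub (hw.comp measurable_snd)).pow_const 2
  have hρint : ∀ w : EuclideanSpace ℝ (Fin N) → ℝ, Measurable w →
      ∫⁻ q, ENNReal.ofReal ((w q.1 - w q.2) ^ 2) ∂ρ = 2 * Jquad N J w := by
    intro w hw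
    rw [hρdef, lintegral_withDensity_eq_lintegral_mul μ2 hdensm (hmeas_sq w hw)]
    rw [Jquad_eq_prod hJmeas hw, ← mul_assoc]
    rw [show (2 : ℝ≥0∞) * (1/2) = 1 by
      rw [one_div, ENNReal.mul_inv_cancel (by norm_num) (by norm_num)]]
    rw [one_mul, hμ2def]
    refine lintegral_congr fun q => ?_
    simp only [Pi.mul_apply, hdensdef]
    rw [← ENNReal.ofReal_mul (hJnonneg _), mul_comm]
  -- the exceptional sets
  set A : ℕ → Set (EuclideanSpace ℝ (Fin N) × EuclideanSpace ℝ (Fin N)) :=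
    fun k => {q | (2:ℝ)⁻¹ ^ k ≤ |(U (k+1) q.1 - U (k+1) q.2) - (U k q.1 - U k q.2)|} with hAdef
  have hAk : ∀ k, ρ (A k) ≤ 2 * ENNReal.ofReal ((2:ℝ)⁻¹ ^ k) := by
    intro k
    set d : EuclideanSpace ℝ (Fin N) → ℝ := u (φ (k+1)) - u (φ k) with hddef
    have hdm : Measurable d := (hum _).sub (hum _)
    have hcheb := mul_meas_ge_le_lintegral₀
      (μ := ρ) (f := fun q => ENNReal.ofReal ((d q.1 - d q.2) ^ 2))
      (Measurable.aemeasurable (hmeas_sq d hdm))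
      (ENNReal.ofReal ((4:ℝ)⁻¹ ^ k))
    have hsubA : A k ⊆ {q | ENNReal.ofReal ((4:ℝ)⁻¹ ^ k)
        ≤ ENNReal.ofReal ((d q.1 - d q.2) ^ 2)} := by
      intro q hq
      have habs : (2:ℝ)⁻¹ ^ k ≤ |d q.1 - d q.2| := by
        have : (U (k+1) q.1 - U (k+1) q.2) - (U k q.1 - U k q.2) = d q.1 - d q.2 := by
          simp only [hddef, Pi.sub_apply, hUdef]
          ring
        rw [← this]
        exact hq
      refine ENNReal.ofReal_le_ofReal ?_
      have h4 : ((2:ℝ)⁻¹ ^ k) ^ 2 = (4:ℝ)⁻¹ ^ k := by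
        rw [← pow_mul, mul_comm, pow_mul]
        norm_num
      calc (4:ℝ)⁻¹ ^ k = ((2:ℝ)⁻¹ ^ k) ^ 2 := h4.symm
        _ ≤ |d q.1 - d q.2| ^ 2 := by
            refine pow_le_pow_left₀ (by positivity) habs 2
        _ = (d q.1 - d q.2) ^ 2 := sq_abs _
    have hint : ∫⁻ q, ENNReal.ofReal ((d q.1 - d q.2) ^ 2) ∂ρ
        ≤ 2 * ENNReal.ofReal ((8:ℝ)⁻¹ ^ k) := by
      rw [hρint d hdm]
      exact mul_le_mul_right (hφspec k (φ (k+1)) (φ k) (hφmono.monotone (Nat.le_succ k)) le_rfl).le _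
    have hmul : ENNReal.ofReal ((4:ℝ)⁻¹ ^ k) * ρ (A k) ≤ 2 * ENNReal.ofReal ((8:ℝ)⁻¹ ^ k) :=
      le_trans (mul_le_mul_right (measure_mono hsubA) _) (le_trans hcheb hint)
    have h40 : ENNReal.ofReal ((4:ℝ)⁻¹ ^ k) ≠ 0 := by
      simp only [ne_eq, ENNReal.ofReal_eq_zero, not_le]
      positivity
    calc ρ (A k) = ENNReal.ofReal ((4:ℝ)⁻¹ ^ k) * ρ (A k) / ENNReal.ofReal ((4:ℝ)⁻¹ ^ k) := by
          rw [mul_comm, mul_div_assoc, ENNReal.div_self h40 ENNReal.ofReal_ne_top, mul_one]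
      _ ≤ 2 * ENNReal.ofReal ((8:ℝ)⁻¹ ^ k) / ENNReal.ofReal ((4:ℝ)⁻¹ ^ k) := by
          exact ENNReal.div_le_div_right hmul _
      _ = 2 * ENNReal.ofReal ((2:ℝ)⁻¹ ^ k) := by
          rw [mul_div_assoc, ← ENNReal.ofReal_div_of_pos (by positivity)]
          congr 2
          rw [← div_pow]
          norm_num
  have hAsum : ∑' k, ρ (A k) ≠ ⊤ := by
    refine ne_top_of_le_ne_top ?_ (ENNReal.tsum_le_tsum hAk)
    rw [ENNReal.tsum_mul_left]
    refine ENNReal.mul_ne_top (by norm_num) ?_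
    have hgeom : ∀ k : ℕ, ENNReal.ofReal ((2:ℝ)⁻¹ ^ k) = (ENNReal.ofReal (2:ℝ)⁻¹) ^ k :=
      fun k => by rw [ENNReal.ofReal_pow (by norm_num)]
    rw [show (fun k : ℕ => ENNReal.ofReal ((2:ℝ)⁻¹ ^ k))
      = fun k => (ENNReal.ofReal (2:ℝ)⁻¹) ^ k from funext hgeom]
    rw [ENNReal.tsum_geometric]
    refine ENNReal.inv_ne_top.2 ?_
    rw [ne_eq, tsub_eq_zero_iff_le, not_le]
    exact ENNReal.ofReal_lt_one.2 (by norm_num)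
  have hlimsup : ρ (limsup A atTop) = 0 := measure_limsup_atTop_eq_zero hAsum
  -- the set of pairs where the subsequence is not Cauchy
  set badseq : Set (EuclideanSpace ℝ (Fin N) × EuclideanSpace ℝ (Fin N)) :=
    {q | ¬ CauchySeq (fun k => U k q.1 - U k q.2)} with hbaddef
  have hbadm : MeasurableSet badseq := by
    rw [hbaddef, show {q : EuclideanSpace ℝ (Fin N) × EuclideanSpace ℝ (Fin N) |
      ¬ CauchySeq (fun k => U k q.1 - U k q.2)}
      = {q : EuclideanSpace ℝ (Fin N) × EuclideanSpace ℝ (Fin N) |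
        CauchySeq (fun k => U k q.1 - U k q.2)}ᶜ from rfl]
    exact (measurableSet_cauchy (fun k =>
      ((hUm k).comp measurable_fst).sub ((hUm k).comp measurable_snd))).compl
  have hbadsub : badseq ⊆ limsup A atTop := by
    intro q hq
    by_contra hnot
    rw [mem_limsup_iff_frequently_mem, not_frequently] at hnot
    rw [eventually_atTop] at hnot
    obtain ⟨K, hK⟩ := hnot
    refine hq ?_
    rw [← cauchySeq_shift K]
    refine cauchySeq_of_le_geometric (2:ℝ)⁻¹ ((2:ℝ)⁻¹ ^ K * 2) (by norm_num) fun n => ?_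
    have hn := hK (n + K) (Nat.le_add_left _ _)
    simp only [hAdef, mem_setOf_eq, not_le] at hn
    rw [Real.dist_eq]
    have heq : |(U (n + K) q.1 - U (n + K) q.2) - (U (n + 1 + K) q.1 - U (n + 1 + K) q.2)|
        = |(U (n + K + 1) q.1 - U (n + K + 1) q.2) - (U (n + K) q.1 - U (n + K) q.2)| := by
      rw [abs_sub_comm, show n + 1 + K = n + K + 1 from by omega]
    rw [heq]
    calc |(U (n + K + 1) q.1 - U (n + K + 1) q.2) - (U (n + K) q.1 - U (n + K) q.2)|
        ≤ (2:ℝ)⁻¹ ^ (n + K) := hn.le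
      _ = (2:ℝ)⁻¹ ^ K * (2:ℝ)⁻¹ ^ n := by rw [← pow_add]; ring_nf
      _ ≤ (2:ℝ)⁻¹ ^ K * 2 * (2:ℝ)⁻¹ ^ n := by
          nlinarith [pow_nonneg (by norm_num : (0:ℝ) ≤ 2⁻¹) K,
            pow_nonneg (by norm_num : (0:ℝ) ≤ 2⁻¹) n]
  have hρbad : ρ badseq = 0 := measure_mono_null hbadsub hlimsup
  -- Part 5 : the pairs in D where the subsequence is not Cauchy form a null set
  set D : Set (EuclideanSpace ℝ (Fin N) × EuclideanSpace ℝ (Fin N)) :=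
    {q | q.2 - q.1 ∈ S} with hDdef
  have hbadD : μ2 (badseq ∩ D) = 0 := by
    have hρ0 : ∫⁻ q in badseq, dens q ∂μ2 = 0 := by
      rw [← withDensity_apply dens hbadm]
      exact hρbad
    have hae := (setLIntegral_eq_zero_iff hbadm hdensm).1 hρ0
    rw [ae_iff] at hae
    have hnull : μ2 {q | ¬ (q ∈ badseq → dens q = 0)} = 0 := hae
    refine measure_mono_null ?_ hnull
    rintro q ⟨hqb, hqD⟩
    have hpos : 0 < J (q.1 - q.2) := by
      have h1 : 0 < J (q.2 - q.1) := hqD.1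
      rw [← neg_sub q.2 q.1, hJeven]
      exact h1
    have hne : dens q ≠ 0 := by
      simp only [hdensdef, ne_eq, ENNReal.ofReal_eq_zero, not_le]
      exact hpos
    exact fun himp => hne (himp hqb)
  -- Part 6 : chaining
  have htransCb : ∀ x y z : EuclideanSpace ℝ (Fin N),
      (x, y) ∉ badseq → (y, z) ∉ badseq → (x, z) ∉ badseq := by
    intro x y z h1 h2
    simp only [hbaddef, mem_setOf_eq, not_not] at h1 h2 ⊢
    have hsum := h1.add h2
    have heq : (fun k => (U k x - U k y) + (U k y - U k z)) = fun k => U k x - U k z :=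
      funext fun k => by ring
    rw [← heq]
    exact hsum
  have hbase : μ2 (badseq ∩ {q | dist q.1 q.2 ≤ c * r}) = 0 := by
    refine glue volume htransCb hbadD hbadD ?_
    rintro ⟨x, z⟩ hq
    simp only [mem_setOf_eq] at hq
    have hsub : (fun y => y - x) ⁻¹' (S₀ ∩ ((fun t => t - (z - x)) ⁻¹' S₀))
        ⊆ {y | (x, y) ∈ D ∧ (y, z) ∈ D} := by
      intro y hy
      obtain ⟨h1, h2⟩ := hy
      constructor
      · exact h1.1
      · have h3 : y - z ∈ S := by
          have heq : (y - x) - (z - x) = y - z := by abel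
          rw [Set.mem_preimage, heq] at h2
          exact h2.1
        have h4 := hSsymm _ h3
        rw [neg_sub] at h4
        exact h4
    refine lt_of_lt_of_le ?_ (measure_mono hsub)
    have hvol : volume ((fun y => y - x) ⁻¹' (S₀ ∩ ((fun t => t - (z - x)) ⁻¹' S₀)))
        = volume (S₀ ∩ ((fun t => t - (z - x)) ⁻¹' S₀)) := by
      rw [show (fun y : EuclideanSpace ℝ (Fin N) => y - x) = fun y => y + (-x) from
        funext fun y => sub_eq_add_neg y x]
      exact measure_preimage_add_right volume (-x) _
    rw [hvol]
    refine overlap p r c hr0 hc0 hc1 hcN hS₀dens ?_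
    rw [show ‖z - x‖ = dist z x from (dist_eq_norm z x).symm, dist_comm]
    exact hq
  have hstep : ∀ m : ℕ,
      μ2 (badseq ∩ {q | dist q.1 q.2 < c * r + m * (c * r / 2)}) = 0 := by
    intro m
    induction m with
    | zero =>
      refine measure_mono_null ?_ hbase
      rintro q ⟨h1, h2⟩
      simp only [Nat.cast_zero, zero_mul, add_zero, mem_setOf_eq] at h2
      exact ⟨h1, h2.le⟩
    | succ m ih =>
      refine glue volume htransCb ih hbase ?_
      rintro ⟨x, z⟩ hq
      simp only [mem_setOf_eq] at hq
      have hcr : 0 < c * r := mul_pos hc0 hr0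
      have hopen : IsOpen (Metric.ball x (c * r + m * (c * r / 2)) ∩ Metric.ball z (c * r)) :=
        Metric.isOpen_ball.inter Metric.isOpen_ball
      have hne : (Metric.ball x (c * r + m * (c * r / 2)) ∩ Metric.ball z (c * r)).Nonempty := by
        by_cases hd : dist x z < c * r
        · refine ⟨z, ?_, ?_⟩
          · rw [Metric.mem_ball, dist_comm]
            have hm0 : (0:ℝ) ≤ (m:ℝ) * (c * r / 2) := by positivity
            linarith
          · rw [Metric.mem_ball, dist_self]
            exact hcr
        · push_neg at hd
          have hdpos : 0 < dist x z := lt_of_lt_of_le hcr hd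
          set t : ℝ := c * r / (2 * dist x z) with htdef
          have ht0 : 0 < t := by positivity
          have ht12 : t ≤ 1/2 := by
            rw [htdef, div_le_iff₀ (by positivity)]
            nlinarith
          refine ⟨z + t • (x - z), ?_, ?_⟩
          · rw [Metric.mem_ball, dist_comm, dist_eq_norm]
            have hxy : x - (z + t • (x - z)) = (1 - t) • (x - z) := by
              rw [sub_smul, one_smul, sub_add_eq_sub_sub]
            rw [hxy, norm_smul, Real.norm_eq_abs, abs_of_nonneg (by linarith)]
            rw [show ‖x - z‖ = dist x z from (dist_eq_norm x z).symm]
            have hts : t * dist x z = c * r / 2 := by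
              rw [htdef]
              field_simp
            have hexp : (1 - t) * dist x z = dist x z - t * dist x z := by ring
            push_cast at hq
            rw [hexp, hts]
            linarith
          · rw [Metric.mem_ball, dist_eq_norm]
            have hyz : z + t • (x - z) - z = t • (x - z) := add_sub_cancel_left z _
            rw [hyz, norm_smul, Real.norm_eq_abs, abs_of_nonneg ht0.le]
            rw [show ‖x - z‖ = dist x z from (dist_eq_norm x z).symm]
            have hts : t * dist x z = c * r / 2 := by
              rw [htdef]
              field_simp
            linarith
      have hsub : (Metric.ball x (c * r + m * (c * r / 2)) ∩ Metric.ball z (c * r))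
          ⊆ {y | (x, y) ∈ {q : EuclideanSpace ℝ (Fin N) × EuclideanSpace ℝ (Fin N) |
              dist q.1 q.2 < c * r + m * (c * r / 2)} ∧
            (y, z) ∈ {q : EuclideanSpace ℝ (Fin N) × EuclideanSpace ℝ (Fin N) |
              dist q.1 q.2 ≤ c * r}} := by
        intro y hy
        constructor
        · simp only [mem_setOf_eq]
          rw [dist_comm]
          exact hy.1
        · simp only [mem_setOf_eq]
          exact (Metric.mem_ball.1 hy.2).le
      exact lt_of_lt_of_le (hopen.measure_pos volume hne) (measure_mono hsub)
  have hbadnull : μ2 badseq = 0 := by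
    have hcover : badseq = ⋃ m : ℕ,
        badseq ∩ {q | dist q.1 q.2 < c * r + m * (c * r / 2)} := by
      ext q
      constructor
      · intro h
        obtain ⟨m, hm⟩ := exists_nat_gt ((dist q.1 q.2 - c * r) / (c * r / 2))
        refine mem_iUnion.2 ⟨m, h, ?_⟩
        have hcr2 : (0:ℝ) < c * r / 2 := by positivity
        rw [div_lt_iff₀ hcr2] at hm
        simp only [mem_setOf_eq]
        linarith
      · intro hq
        obtain ⟨m, hm⟩ := mem_iUnion.1 hq
        exact hm.1
    rw [hcover]
    exact measure_iUnion_null fun m => hstep m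
  -- Part 7 : a.e. convergence of the subsequence and the limit function
  have hslice := Measure.measure_ae_null_of_prod_null hbadnull
  obtain ⟨R, hR⟩ := hΩb.subset_closedBall 0
  haveI hnt : Nontrivial (EuclideanSpace ℝ (Fin N)) := by
    refine ⟨⟨EuclideanSpace.single ⟨0, hN⟩ (1:ℝ), 0, ?_⟩⟩
    intro h
    have h2 := congrArg (fun w : EuclideanSpace ℝ (Fin N) => ‖w‖) h
    simpa using h2
  set R' : ℝ := max R 0 with hR'def
  obtain ⟨x₀, hx₀⟩ := exists_norm_eq (EuclideanSpace ℝ (Fin N))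
    (by positivity : (0:ℝ) ≤ R' + 2)
  have hballΩ : Metric.ball x₀ 1 ⊆ Ωᶜ := by
    intro y hy hyΩ
    have h1 : ‖y‖ ≤ R := by
      have := hR hyΩ
      simpa [Metric.mem_closedBall, dist_zero_right] using this
    have h2 : dist y x₀ < 1 := hy
    have h3 : ‖x₀‖ ≤ ‖y‖ + dist y x₀ := by
      rw [dist_eq_norm]
      calc ‖x₀‖ = ‖y - (y - x₀)‖ := by
            congr 1
            exact (sub_sub_cancel y x₀).symm
        _ ≤ ‖y‖ + ‖y - x₀‖ := norm_sub_le _ _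
    rw [hx₀] at h3
    have h4 : R ≤ R' := le_max_left _ _
    linarith
  have hTnull : volume {x : EuclideanSpace ℝ (Fin N) |
      ¬ volume (Prod.mk x ⁻¹' badseq) = 0} = 0 := by
    have hae : ∀ᵐ x ∂(volume : Measure (EuclideanSpace ℝ (Fin N))),
        volume (Prod.mk x ⁻¹' badseq) = 0 := by
      filter_upwards [hslice] with x hx
      simpa using hx
    exact ae_iff.1 hae
  have hballpos : 0 < volume (Metric.ball x₀ 1) := Metric.measure_ball_pos volume x₀ one_pos
  obtain ⟨x', hx'ball, hx'null⟩ :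
      ∃ x', x' ∈ Metric.ball x₀ 1 ∧ volume (Prod.mk x' ⁻¹' badseq) = 0 := by
    by_contra h
    push_neg at h
    have hsubT : Metric.ball x₀ 1 ⊆ {x | ¬ volume (Prod.mk x ⁻¹' badseq) = 0} :=
      fun x hx => h x hx
    exact absurd (measure_mono_null hsubT hTnull) hballpos.ne'
  have hx'Ω : x' ∉ Ω := hballΩ hx'ball
  have hconv_ae : ∀ᵐ y ∂(volume : Measure (EuclideanSpace ℝ (Fin N))),
      ∃ l : ℝ, Tendsto (fun k => U k y) atTop (nhds l) := by
    have hae2 : ∀ᵐ y ∂(volume : Measure (EuclideanSpace ℝ (Fin N))), (x', y) ∉ badseq := by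
      have h5 := measure_eq_zero_iff_ae_notMem.mp hx'null
      filter_upwards [h5] with y hy
      exact hy
    filter_upwards [hae2] with y hy
    have hc : CauchySeq (fun k => U k x' - U k y) := by
      simp only [hbaddef, mem_setOf_eq, not_not] at hy
      exact hy
    have hzero : (fun k => U k x' - U k y) = fun k => 0 - U k y := by
      funext k
      rw [show U k x' = 0 from huz (φ k) x' hx'Ω]
    rw [hzero] at hc
    have hc2 : CauchySeq (fun k => U k y) := by
      have hneg := hc.neg
      have heq2 : (fun k => -(0 - U k y)) = fun k => U k y := funext fun k => by ring
      rw [show -(fun k => (0:ℝ) - U k y) = fun k => -(0 - U k y) from rfl, heq2] at hneg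
      exact hneg
    exact cauchySeq_tendsto_of_complete hc2
  obtain ⟨g, hgm, hgtend⟩ := measurable_limit_of_tendsto_metrizable_ae
    (μ := (volume : Measure (EuclideanSpace ℝ (Fin N)))) (L := atTop)
    (f := fun k => U k) (fun k => (hUm k).aemeasurable) hconv_ae
  set v : EuclideanSpace ℝ (Fin N) → ℝ := fun x => if x ∈ Ω then g x else 0 with hvdef
  have hvm : Measurable v := Measurable.ite hΩo.measurableSet hgm measurable_const
  have hvz : ∀ x ∉ Ω, v x = 0 := fun x hx => if_neg hx
  have hvtend : ∀ᵐ x ∂(volume : Measure (EuclideanSpace ℝ (Fin N))),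
      Tendsto (fun k => U k x) atTop (nhds (v x)) := by
    filter_upwards [hgtend] with x hx
    by_cases hxΩ : x ∈ Ω
    · rw [hvdef]
      simp only [if_pos hxΩ]
      exact hx
    · have hUx : (fun k => U k x) = fun _ => (0:ℝ) := funext fun k => huz (φ k) x hxΩ
      rw [hvdef]
      simp only [if_neg hxΩ, hUx]
      exact tendsto_const_nhds
  -- Part 8 : Fatou's lemma
  have htwohalf : (2:ℝ≥0∞) * (1/2) = 1 := by
    rw [one_div, ENNReal.mul_inv_cancel (by norm_num) (by norm_num)]
  have hmain : ∀ ε : ℝ, 0 < ε → ∃ M₀ : ℕ, ∀ n ≥ M₀,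
      Jquad N J (u n - v) ≤ ENNReal.ofReal ε := by
    intro ε hε
    obtain ⟨M₀, hM₀⟩ := hCauchy ε hε
    refine ⟨M₀, fun n hn => ?_⟩
    set Fk : ℕ → EuclideanSpace ℝ (Fin N) × EuclideanSpace ℝ (Fin N) → ℝ≥0∞ :=
      fun k q => ENNReal.ofReal
        (((u n - u (φ k)) q.1 - (u n - u (φ k)) q.2) ^ 2 * J (q.1 - q.2)) with hFkdef
    set Fi : EuclideanSpace ℝ (Fin N) × EuclideanSpace ℝ (Fin N) → ℝ≥0∞ :=
      fun q => ENNReal.ofReal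
        (((u n - v) q.1 - (u n - v) q.2) ^ 2 * J (q.1 - q.2)) with hFidef
    have hprod_ae : ∀ᵐ q ∂μ2, Tendsto (fun k => Fk k q) atTop (nhds (Fi q)) := by
      filter_upwards [ae_prod_mk volume hvtend] with q hq
      obtain ⟨h1, h2⟩ := hq
      refine ENNReal.tendsto_ofReal ?_
      have t1 : Tendsto (fun k => u n q.1 - U k q.1) atTop (nhds (u n q.1 - v q.1)) :=
        tendsto_const_nhds.sub h1
      have t2 : Tendsto (fun k => u n q.2 - U k q.2) atTop (nhds (u n q.2 - v q.2)) :=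
        tendsto_const_nhds.sub h2
      have t3 := ((t1.sub t2).pow 2).mul_const (J (q.1 - q.2))
      simpa [Pi.sub_apply, hUdef] using t3
    have hJn : Jquad N J (u n - v) = (1/2 : ℝ≥0∞) * ∫⁻ q, Fi q ∂μ2 := by
      rw [Jquad_eq_prod hJmeas (w := u n - v) ((hum n).sub hvm), hμ2def, hFidef]
    have hFatou : ∫⁻ q, Fi q ∂μ2 ≤ liminf (fun k => ∫⁻ q, Fk k q ∂μ2) atTop := by
      have hcongr : ∫⁻ q, Fi q ∂μ2 = ∫⁻ q, liminf (fun k => Fk k q) atTop ∂μ2 :=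
        lintegral_congr_ae (by
          filter_upwards [hprod_ae] with q hq
          exact hq.liminf_eq.symm)
      rw [hcongr]
      exact lintegral_liminf_le fun k =>
        integrand_measurable hJmeas ((hum n).sub (hum (φ k))) ((hum n).sub (hum (φ k)))
    have hbound : liminf (fun k => ∫⁻ q, Fk k q ∂μ2) atTop ≤ 2 * ENNReal.ofReal ε := by
      have hev : ∀ᶠ k in atTop, (∫⁻ q, Fk k q ∂μ2) ≤ 2 * ENNReal.ofReal ε := by
        filter_upwards [eventually_ge_atTop M₀] with k hk
        have hk2 : M₀ ≤ φ k := le_trans hk hφmono.le_apply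
        have hJk := hM₀ n hn (φ k) hk2
        have hid : ∫⁻ q, Fk k q ∂μ2 = 2 * Jquad N J (u n - u (φ k)) := by
          rw [Jquad_eq_prod hJmeas (w := u n - u (φ k)) ((hum n).sub (hum (φ k))), hμ2def,
            ← mul_assoc, htwohalf, one_mul, hFkdef]
        rw [hid]
        exact mul_le_mul_right hJk.le _
      calc liminf (fun k => ∫⁻ q, Fk k q ∂μ2) atTop
          ≤ liminf (fun _ : ℕ => 2 * ENNReal.ofReal ε) atTop := liminf_le_liminf hev
        _ = 2 * ENNReal.ofReal ε := liminf_const _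
    calc Jquad N J (u n - v) = (1/2 : ℝ≥0∞) * ∫⁻ q, Fi q ∂μ2 := hJn
      _ ≤ (1/2 : ℝ≥0∞) * (2 * ENNReal.ofReal ε) :=
          mul_le_mul_right (le_trans hFatou hbound) _
      _ = ENNReal.ofReal ε := by rw [← mul_assoc, mul_comm (1/2 : ℝ≥0∞) 2, htwohalf, one_mul]
  have hJv_lt_top : Jquad N J v < ⊤ := by
    obtain ⟨M₁, hM₁⟩ := hmain 1 one_pos
    have h1 : Jquad N J (u M₁ - v) ≤ ENNReal.ofReal 1 := hM₁ M₁ le_rfl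
    have hveq : v = u M₁ + (-(u M₁ - v)) := by
      funext x
      simp only [Pi.add_apply, Pi.neg_apply, Pi.sub_apply]
      ring
    rw [hveq]
    refine Jquad_add_lt_top hJmeas (hum M₁) ((hum M₁).sub hvm).neg (huf M₁) ?_
    rw [Jquad_neg]
    exact lt_of_le_of_lt h1 ENNReal.ofReal_lt_top
  refine ⟨v, ⟨hvm, hJv_lt_top, hvz⟩, ?_⟩
  rw [ENNReal.tendsto_atTop_zero]
  intro ε hε
  by_cases hεtop : ε = ⊤
  · obtain ⟨M₁, hM₁⟩ := hmain 1 one_pos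
    exact ⟨M₁, fun n _ => by rw [hεtop]; exact le_top⟩
  · obtain ⟨M₁, hM₁⟩ := hmain ε.toReal (ENNReal.toReal_pos hε.ne' hεtop)
    exact ⟨M₁, fun n hn => le_trans (hM₁ n hn) (by rw [ENNReal.ofReal_toReal hεtop])⟩
end

section
/- Let J be an even nonnegative kernel satisfying (J1), Ω ⊂ ℝᴺ bounded open, v ∈ C²_c(ℝᴺ), and u ∈ 𝒟(Ω) ∩ L²(Ω). Then 𝒥(u,v) = ∫_{ℝᴺ} u(x) [Iv](x) dx, where [Iv](x) is the principal value integral lim_{ε→0} ∫_{|x−y|≥ε} (v(x)−v(y)) J(x−y) dy. -/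
open MeasureTheory ENNReal Set Filter

noncomputable def Jbil (N : ℕ) (J : EuclideanSpace ℝ (Fin N) → ℝ)
    (u v : EuclideanSpace ℝ (Fin N) → ℝ) : ℝ :=
  (1 / 2 : ℝ) * ∫ x, ∫ y, (u x - u y) * (v x - v y) * J (x - y)

noncomputable def Iop (N : ℕ) (J : EuclideanSpace ℝ (Fin N) → ℝ)
    (v : EuclideanSpace ℝ (Fin N) → ℝ) (x : EuclideanSpace ℝ (Fin N)) : ℝ :=
  limUnder (nhdsWithin 0 (Set.Ioi 0))
    (fun ε => ∫ y in {y | ε ≤ ‖x - y‖}, (v x - v y) * J (x - y))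



section Aux

variable {N : ℕ}

local notation "E" => EuclideanSpace ℝ (Fin N)

lemma aux_vol_univ_zero : (volume : Measure (EuclideanSpace ℝ (Fin 0))) Set.univ = 1 := by
  have h := (EuclideanSpace.volume_preserving_symm_measurableEquiv_toLp (Fin 0)).measure_preimage
    (s := Set.univ) (by simp)
  simpa [volume_pi, Measure.pi_univ] using h

lemma aux_vol_singleton (hN : 0 < N) (x : E) : volume ({x} : Set E) = 0 := by
  have : Nontrivial E := by
    have : Nonempty (Fin N) := ⟨⟨0, hN⟩⟩
    infer_instance
  exact measure_singleton x

lemma aux_diag (hN : 0 < N) :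
    (volume.prod volume) {p : E × E | p.1 = p.2} = 0 := by
  have hms : MeasurableSet {p : E × E | p.1 = p.2} :=
    measurableSet_eq_fun measurable_fst measurable_snd
  rw [Measure.prod_apply hms]
  have : ∀ x : E, (volume : Measure E) (Prod.mk x ⁻¹' {p : E × E | p.1 = p.2}) = 0 := by
    intro x
    have : (Prod.mk x ⁻¹' {p : E × E | p.1 = p.2}) = {x} := by
      ext y; simp [eq_comm]
    rw [this]
    exact aux_vol_singleton hN x
  simp only [this, lintegral_zero]

lemma aux_Jfin {J : E → ℝ} (hJmeas : Measurable J) (hJnonneg : ∀ z, 0 ≤ J z)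
    (hJ1a : ∫⁻ z in {z : E | 1 ≤ ‖z‖}, ENNReal.ofReal (J z) < ⊤)
    (hJ1b : ∫⁻ z in {z : E | ‖z‖ ≤ 1}, ENNReal.ofReal (‖z‖ ^ 2 * J z) < ⊤)
    {ε : ℝ} (hε : 0 < ε) :
    ∫⁻ z in {z : E | ε ≤ ‖z‖}, ENNReal.ofReal (J z) < ⊤ := by
  have hsub : {z : E | ε ≤ ‖z‖} ⊆ ({z : E | ε ≤ ‖z‖} ∩ {z : E | ‖z‖ ≤ 1}) ∪ {z : E | 1 ≤ ‖z‖} := by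
    intro z hz
    rcases le_total ‖z‖ 1 with h | h
    · exact Or.inl ⟨hz, h⟩
    · exact Or.inr h
  calc ∫⁻ z in {z : E | ε ≤ ‖z‖}, ENNReal.ofReal (J z)
      ≤ ∫⁻ z in ({z : E | ε ≤ ‖z‖} ∩ {z : E | ‖z‖ ≤ 1}) ∪ {z : E | 1 ≤ ‖z‖},
          ENNReal.ofReal (J z) := lintegral_mono_set hsub
    _ ≤ (∫⁻ z in ({z : E | ε ≤ ‖z‖} ∩ {z : E | ‖z‖ ≤ 1}), ENNReal.ofReal (J z)) +
          ∫⁻ z in {z : E | 1 ≤ ‖z‖}, ENNReal.ofReal (J z) := lintegral_union_le _ _ _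
    _ < ⊤ := by
        refine ENNReal.add_lt_top.2 ⟨?_, hJ1a⟩
        have hb : ∀ z ∈ ({z : E | ε ≤ ‖z‖} ∩ {z : E | ‖z‖ ≤ 1}),
            ENNReal.ofReal (J z) ≤ ENNReal.ofReal (ε⁻¹ ^ 2) * ENNReal.ofReal (‖z‖ ^ 2 * J z) := by
          intro z hz
          rw [← ENNReal.ofReal_mul (by positivity)]
          apply ENNReal.ofReal_le_ofReal
          have h1 : ε ≤ ‖z‖ := hz.1
          have : ε ^ 2 * J z ≤ ‖z‖ ^ 2 * J z := by
            apply mul_le_mul_of_nonneg_right _ (hJnonneg z)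
            exact pow_le_pow_left₀ hε.le h1 2
          calc J z = ε⁻¹ ^ 2 * (ε ^ 2 * J z) := by field_simp
            _ ≤ ε⁻¹ ^ 2 * (‖z‖ ^ 2 * J z) := by
                apply mul_le_mul_of_nonneg_left this (by positivity)
        calc ∫⁻ z in ({z : E | ε ≤ ‖z‖} ∩ {z : E | ‖z‖ ≤ 1}), ENNReal.ofReal (J z)
            ≤ ∫⁻ z in ({z : E | ε ≤ ‖z‖} ∩ {z : E | ‖z‖ ≤ 1}),
                ENNReal.ofReal (ε⁻¹ ^ 2) * ENNReal.ofReal (‖z‖ ^ 2 * J z) := by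
              apply setLIntegral_mono (by fun_prop) hb
          _ ≤ ENNReal.ofReal (ε⁻¹ ^ 2) * ∫⁻ z in {z : E | ‖z‖ ≤ 1},
                ENNReal.ofReal (‖z‖ ^ 2 * J z) := by
              rw [lintegral_const_mul' _ _ ENNReal.ofReal_ne_top]
              exact mul_le_mul_right (lintegral_mono_set inter_subset_right) _
          _ < ⊤ := ENNReal.mul_lt_top ENNReal.ofReal_lt_top hJ1b

lemma aux_taylor {v : E → ℝ} {K₂ : NNReal} (hd : Differentiable ℝ v)
    (hlip : LipschitzWith K₂ (fderiv ℝ v)) (x y : E) :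
    |v x - v y - (fderiv ℝ v x) (x - y)| ≤ K₂ * ‖x - y‖ ^ 2 := by
  set L := fderiv ℝ v x with hL
  set g : E → ℝ := fun w => v w - L w with hg
  have hgd : ∀ w, HasFDerivAt g (fderiv ℝ v w - L) w := fun w =>
    ((hd w).hasFDerivAt).sub (L.hasFDerivAt)
  have key : ‖g x - g y‖ ≤ (K₂ * ‖x - y‖) * ‖x - y‖ := by
    have := Convex.norm_image_sub_le_of_norm_fderiv_le (f := g) (C := K₂ * ‖x - y‖)
      (s := Metric.closedBall x ‖x - y‖) (𝕜 := ℝ)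
      (fun w _ => (hgd w).differentiableAt)
      (fun w hw => by
        rw [(hgd w).fderiv]
        have := hlip.dist_le_mul w x
        rw [dist_eq_norm] at this
        calc ‖fderiv ℝ v w - L‖ ≤ K₂ * ‖w - x‖ := this
          _ ≤ K₂ * ‖x - y‖ := by
              apply mul_le_mul_of_nonneg_left _ K₂.2
              simpa [Metric.mem_closedBall, dist_eq_norm] using hw)
      (convex_closedBall _ _) (y := x) (x := y) ?_ (Metric.mem_closedBall_self (by positivity))
    · simpa [norm_sub_rev] using this
    · simp [Metric.mem_closedBall, dist_eq_norm, norm_sub_rev]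
  have hgxy : g x - g y = v x - v y - L (x - y) := by
    simp only [hg, map_sub]
    ring
  rw [hgxy] at key
  calc |v x - v y - L (x - y)| ≤ (K₂ * ‖x - y‖) * ‖x - y‖ := key
    _ = K₂ * ‖x - y‖ ^ 2 := by ring


lemma aux_integrableOn {f : E → ℝ} {s : Set E} (g : E → ℝ≥0∞)
    (hf : AEStronglyMeasurable f (volume.restrict s))
    (hgm : Measurable g) (hg : ∫⁻ z in s, g z < ⊤)
    (hb : ∀ z ∈ s, ENNReal.ofReal |f z| ≤ g z) : IntegrableOn f s volume := by
  refine ⟨hf, ?_⟩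
  rw [hasFiniteIntegral_iff_norm]
  calc ∫⁻ z in s, ENNReal.ofReal ‖f z‖ ≤ ∫⁻ z in s, g z := by
        apply setLIntegral_mono hgm
        intro z hz
        rw [Real.norm_eq_abs]
        exact hb z hz
    _ < ⊤ := hg

lemma aux_int_quad {J : E → ℝ} (hJmeas : Measurable J) (hJnonneg : ∀ z, 0 ≤ J z)
    (hJ1b : ∫⁻ z in {z : E | ‖z‖ ≤ 1}, ENNReal.ofReal (‖z‖ ^ 2 * J z) < ⊤) (c : ℝ) :
    IntegrableOn (fun z : E => c * ‖z‖ ^ 2 * J z) {z : E | ‖z‖ ≤ 1} volume := by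
  refine aux_integrableOn (fun z => ENNReal.ofReal |c| * ENNReal.ofReal (‖z‖ ^ 2 * J z))
    (Measurable.aestronglyMeasurable
      ((measurable_const.mul (measurable_norm.pow_const 2)).mul hJmeas))
    (measurable_const.mul
      (ENNReal.measurable_ofReal.comp ((measurable_norm.pow_const 2).mul hJmeas))) ?_ ?_
  · rw [lintegral_const_mul' _ _ ENNReal.ofReal_ne_top]
    exact ENNReal.mul_lt_top ENNReal.ofReal_lt_top hJ1b
  · intro z _
    rw [← ENNReal.ofReal_mul (abs_nonneg _)]
    apply ENNReal.ofReal_le_ofReal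
    calc |c * ‖z‖ ^ 2 * J z| = |c| * (‖z‖ ^ 2 * J z) := by
          rw [abs_mul, abs_mul, abs_of_nonneg (hJnonneg z),
            abs_of_nonneg (pow_nonneg (norm_nonneg z) 2)]
          ring
      _ ≤ |c| * (‖z‖ ^ 2 * J z) := le_rfl

lemma aux_int_tail {J : E → ℝ} (hJmeas : Measurable J) (hJnonneg : ∀ z, 0 ≤ J z)
    (hJ1a : ∫⁻ z in {z : E | 1 ≤ ‖z‖}, ENNReal.ofReal (J z) < ⊤) (c : ℝ) :
    IntegrableOn (fun z : E => c * J z) {z : E | 1 < ‖z‖} volume := by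
  refine aux_integrableOn (fun z => ENNReal.ofReal |c| * ENNReal.ofReal (J z))
    (Measurable.aestronglyMeasurable (measurable_const.mul hJmeas))
    (measurable_const.mul (ENNReal.measurable_ofReal.comp hJmeas)) ?_ ?_
  · rw [lintegral_const_mul' _ _ ENNReal.ofReal_ne_top]
    apply ENNReal.mul_lt_top ENNReal.ofReal_lt_top
    have hss : {z : E | 1 < ‖z‖} ⊆ {z : E | 1 ≤ ‖z‖} := by
      intro z hz
      simp only [Set.mem_setOf_eq] at hz ⊢
      exact hz.le
    calc ∫⁻ z in {z : E | 1 < ‖z‖}, ENNReal.ofReal (J z)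
        ≤ ∫⁻ z in {z : E | 1 ≤ ‖z‖}, ENNReal.ofReal (J z) := lintegral_mono_set hss
      _ < ⊤ := hJ1a
  · intro z _
    rw [← ENNReal.ofReal_mul (abs_nonneg _)]
    apply ENNReal.ofReal_le_ofReal
    rw [abs_mul, abs_of_nonneg (hJnonneg z)]

lemma aux_int_gsubl {J v : E → ℝ} (hJmeas : Measurable J) (hJnonneg : ∀ z, 0 ≤ J z)
    (hJ1b : ∫⁻ z in {z : E | ‖z‖ ≤ 1}, ENNReal.ofReal (‖z‖ ^ 2 * J z) < ⊤)
    (hvc : Continuous v)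
    (hd : Differentiable ℝ v) {K₂ : NNReal} (hlip : LipschitzWith K₂ (fderiv ℝ v))
    (x : E) :
    IntegrableOn (fun z : E => (v x - v (x - z) - fderiv ℝ v x z) * J z)
      {z : E | ‖z‖ ≤ 1} volume := by
  have hgm : Measurable fun z : E => v x - v (x - z) - (fderiv ℝ v x) z :=
    (measurable_const.sub (hvc.measurable.comp (measurable_const.sub measurable_id))).sub
      (fderiv ℝ v x).continuous.measurable
  refine aux_integrableOn (fun z => ENNReal.ofReal (K₂ : ℝ) * ENNReal.ofReal (‖z‖ ^ 2 * J z))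
    (Measurable.aestronglyMeasurable (hgm.mul hJmeas))
    (measurable_const.mul
      (ENNReal.measurable_ofReal.comp ((measurable_norm.pow_const 2).mul hJmeas))) ?_ ?_
  · rw [lintegral_const_mul' _ _ ENNReal.ofReal_ne_top]
    exact ENNReal.mul_lt_top ENNReal.ofReal_lt_top hJ1b
  · intro z _
    rw [← ENNReal.ofReal_mul NNReal.zero_le_coe]
    apply ENNReal.ofReal_le_ofReal
    have ht := aux_taylor hd hlip x (x - z)
    rw [_root_.sub_sub_cancel] at ht
    calc |(v x - v (x - z) - (fderiv ℝ v x) z) * J z|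
        = |v x - v (x - z) - (fderiv ℝ v x) z| * J z := by
          rw [abs_mul, abs_of_nonneg (hJnonneg z)]
      _ ≤ (K₂ * ‖z‖ ^ 2) * J z := mul_le_mul_of_nonneg_right ht (hJnonneg z)
      _ = K₂ * (‖z‖ ^ 2 * J z) := by ring

lemma aux_int_gtail {J v : E → ℝ} (hJmeas : Measurable J) (hJnonneg : ∀ z, 0 ≤ J z)
    (hJ1a : ∫⁻ z in {z : E | 1 ≤ ‖z‖}, ENNReal.ofReal (J z) < ⊤)
    (hvc : Continuous v) {Mv : ℝ} (hMv : ∀ y, |v y| ≤ Mv) (x : E) :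
    IntegrableOn (fun z : E => (v x - v (x - z)) * J z) {z : E | 1 < ‖z‖} volume := by
  have h2 : ∀ z : E, |v x - v (x - z)| ≤ 2 * Mv := by
    intro z
    calc |v x - v (x - z)| ≤ |v x| + |v (x - z)| := abs_sub _ _
      _ ≤ 2 * Mv := by have := hMv x; have := hMv (x - z); linarith
  refine aux_integrableOn (fun z => ENNReal.ofReal (2 * Mv) * ENNReal.ofReal (J z))
    (Measurable.aestronglyMeasurable
      ((measurable_const.sub (hvc.measurable.comp (measurable_const.sub measurable_id))).mul
        hJmeas))
    (measurable_const.mul (ENNReal.measurable_ofReal.comp hJmeas)) ?_ ?_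
  · rw [lintegral_const_mul' _ _ ENNReal.ofReal_ne_top]
    apply ENNReal.mul_lt_top ENNReal.ofReal_lt_top
    have hss : {z : E | 1 < ‖z‖} ⊆ {z : E | 1 ≤ ‖z‖} := by
      intro z hz
      simp only [Set.mem_setOf_eq] at hz ⊢
      exact hz.le
    calc ∫⁻ z in {z : E | 1 < ‖z‖}, ENNReal.ofReal (J z)
        ≤ ∫⁻ z in {z : E | 1 ≤ ‖z‖}, ENNReal.ofReal (J z) := lintegral_mono_set hss
      _ < ⊤ := hJ1a
  · intro z _
    have hMv0 : 0 ≤ 2 * Mv := le_trans (abs_nonneg _) (h2 0)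
    rw [← ENNReal.ofReal_mul hMv0]
    apply ENNReal.ofReal_le_ofReal
    calc |(v x - v (x - z)) * J z| = |v x - v (x - z)| * J z := by
          rw [abs_mul, abs_of_nonneg (hJnonneg z)]
      _ ≤ 2 * Mv * J z := mul_le_mul_of_nonneg_right (h2 z) (hJnonneg z)

lemma aux_odd_vanish {J v : E → ℝ} (hJmeas : Measurable J) (hJeven : ∀ z, J (-z) = J z)
    (x : E) {s : Set E} (hs : ∀ z, z ∈ s ↔ -z ∈ s) :
    ∫ z in s, (fderiv ℝ v x) z * J z = 0 := by
  set h : E → ℝ := fun z => (fderiv ℝ v x) z * J z with hh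
  have hpre : (Neg.neg : E → E) ⁻¹' s = s := by
    ext z; simp only [Set.mem_preimage]; exact (hs z).symm
  have key : ∫ z in s, h (-z) = ∫ z in s, h z := by
    have := (Measure.measurePreserving_neg (volume : Measure E)).setIntegral_preimage_emb
      (MeasurableEquiv.neg E).measurableEmbedding h s
    simpa [hpre] using this
  have hodd : ∀ z, h (-z) = -h z := by
    intro z
    simp only [hh, map_neg, hJeven]
    ring
  have : ∫ z in s, h z = -∫ z in s, h z := by
    conv_lhs => rw [← key]
    rw [← integral_neg]
    apply integral_congr_ae
    filter_upwards with z using hodd z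
  linarith [this]

lemma aux_decomp {J v : E → ℝ} (hJmeas : Measurable J) (hJnonneg : ∀ z, 0 ≤ J z)
    (hJeven : ∀ z, J (-z) = J z)
    (hJ1a : ∫⁻ z in {z : E | 1 ≤ ‖z‖}, ENNReal.ofReal (J z) < ⊤)
    (hJ1b : ∫⁻ z in {z : E | ‖z‖ ≤ 1}, ENNReal.ofReal (‖z‖ ^ 2 * J z) < ⊤)
    (hvc : Continuous v) {Mv : ℝ} (hMv : ∀ y, |v y| ≤ Mv)
    (hd : Differentiable ℝ v) {K₂ : NNReal} (hlip : LipschitzWith K₂ (fderiv ℝ v))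
    {D : ℝ} (hD : ∀ y, ‖fderiv ℝ v y‖ ≤ D)
    (x : E) {ε : ℝ} (hε : ε ∈ Set.Ioc (0:ℝ) 1) :
    ∫ z, (v x - v (x - z)) * Set.indicator {z : E | ε ≤ ‖z‖} J z
      = (∫ z in {z : E | ‖z‖ ≤ 1},
          Set.indicator {z : E | ε ≤ ‖z‖}
            (fun z => (v x - v (x - z) - fderiv ℝ v x z) * J z) z)
        + ∫ z in {z : E | 1 < ‖z‖}, (v x - v (x - z)) * J z := by
  obtain ⟨hε0, hε1⟩ := hε
  set g : E → ℝ := fun z => v x - v (x - z) with hg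
  set ℓ : E → ℝ := fun z => (fderiv ℝ v x) z with hℓ
  have hSm : MeasurableSet {z : E | ε ≤ ‖z‖} :=
    measurableSet_le measurable_const measurable_norm
  have ht1m : MeasurableSet {z : E | ‖z‖ ≤ 1} :=
    measurableSet_le measurable_norm measurable_const
  have hCm : MeasurableSet {z : E | 1 < ‖z‖} :=
    measurableSet_lt measurable_const measurable_norm
  set Aε : Set E := {z : E | ε ≤ ‖z‖} ∩ {z : E | ‖z‖ ≤ 1} with hAε
  have hAεm : MeasurableSet Aε := hSm.inter ht1m
  -- Step 1: indicator
  have step1 : ∫ z, g z * Set.indicator {z : E | ε ≤ ‖z‖} J z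
      = ∫ z in {z : E | ε ≤ ‖z‖}, g z * J z := by
    rw [← integral_indicator hSm]
    apply integral_congr_ae
    filter_upwards with z
    rw [Set.indicator_mul_right]
  -- Step 2: split the domain
  have hunion : {z : E | ε ≤ ‖z‖} = Aε ∪ {z : E | 1 < ‖z‖} := by
    ext z
    simp only [hAε, Set.mem_setOf_eq, Set.mem_union, Set.mem_inter_iff]
    constructor
    · intro h
      rcases le_or_gt ‖z‖ 1 with h1 | h1
      · exact Or.inl ⟨h, h1⟩
      · exact Or.inr h1
    · rintro (⟨h, _⟩ | h)
      · exact h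
      · linarith
  have hdisj : Disjoint Aε {z : E | 1 < ‖z‖} := by
    rw [Set.disjoint_left]
    rintro z ⟨_, h1⟩ h2
    simp only [Set.mem_setOf_eq] at h1 h2
    linarith
  -- integrability on pieces
  have hIsubl : IntegrableOn (fun z => (g z - ℓ z) * J z) {z : E | ‖z‖ ≤ 1} volume :=
    aux_int_gsubl hJmeas hJnonneg hJ1b hvc hd hlip x
  have hIℓ : IntegrableOn (fun z => ℓ z * J z) Aε volume := by
    refine aux_integrableOn (fun z => ENNReal.ofReal (D * ε⁻¹) * ENNReal.ofReal (‖z‖ ^ 2 * J z))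
      (Measurable.aestronglyMeasurable ((fderiv ℝ v x).continuous.measurable.mul hJmeas))
      (measurable_const.mul
        (ENNReal.measurable_ofReal.comp ((measurable_norm.pow_const 2).mul hJmeas))) ?_ ?_
    · rw [lintegral_const_mul' _ _ ENNReal.ofReal_ne_top]
      apply ENNReal.mul_lt_top ENNReal.ofReal_lt_top
      exact lt_of_le_of_lt (lintegral_mono_set Set.inter_subset_right) hJ1b
    · rintro z ⟨hz1, _⟩
      simp only [Set.mem_setOf_eq] at hz1
      have hD0 : 0 ≤ D := le_trans (norm_nonneg _) (hD x)
      rw [← ENNReal.ofReal_mul (by positivity)]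
      apply ENNReal.ofReal_le_ofReal
      have hℓb : |ℓ z| ≤ D * ‖z‖ := by
        calc |ℓ z| ≤ ‖fderiv ℝ v x‖ * ‖z‖ := (fderiv ℝ v x).le_opNorm z
          _ ≤ D * ‖z‖ := mul_le_mul_of_nonneg_right (hD x) (norm_nonneg z)
      have hz : ‖z‖ ≤ ε⁻¹ * ‖z‖ ^ 2 := by
        have h1 : ε * ‖z‖ ≤ ‖z‖ * ‖z‖ := by
          apply mul_le_mul_of_nonneg_right hz1 (norm_nonneg z)
        calc ‖z‖ = ε⁻¹ * (ε * ‖z‖) := by field_simp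
          _ ≤ ε⁻¹ * (‖z‖ * ‖z‖) := by
              apply mul_le_mul_of_nonneg_left h1 (by positivity)
          _ = ε⁻¹ * ‖z‖ ^ 2 := by ring
      calc |ℓ z * J z| = |ℓ z| * J z := by rw [abs_mul, abs_of_nonneg (hJnonneg z)]
        _ ≤ (D * ‖z‖) * J z := mul_le_mul_of_nonneg_right hℓb (hJnonneg z)
        _ ≤ (D * (ε⁻¹ * ‖z‖ ^ 2)) * J z := by
            apply mul_le_mul_of_nonneg_right _ (hJnonneg z)
            exact mul_le_mul_of_nonneg_left hz hD0
        _ = D * ε⁻¹ * (‖z‖ ^ 2 * J z) := by ring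
  have hIgA : IntegrableOn (fun z => g z * J z) Aε volume := by
    have : (fun z : E => g z * J z) = fun z => (g z - ℓ z) * J z + ℓ z * J z := by
      funext z; ring
    rw [this]
    exact (hIsubl.mono_set Set.inter_subset_right).add hIℓ
  have hIgC : IntegrableOn (fun z => g z * J z) {z : E | 1 < ‖z‖} volume :=
    aux_int_gtail hJmeas hJnonneg hJ1a hvc hMv x
  -- oddness
  have hodd : ∫ z in Aε, ℓ z * J z = 0 := by
    apply aux_odd_vanish hJmeas hJeven x
    intro z
    simp [hAε, Set.mem_setOf_eq]
  calc ∫ z, g z * Set.indicator {z : E | ε ≤ ‖z‖} J z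
      = ∫ z in {z : E | ε ≤ ‖z‖}, g z * J z := step1
    _ = (∫ z in Aε, g z * J z) + ∫ z in {z : E | 1 < ‖z‖}, g z * J z := by
        rw [hunion]
        exact setIntegral_union hdisj hCm hIgA hIgC
    _ = ((∫ z in Aε, (g z - ℓ z) * J z) + ∫ z in Aε, ℓ z * J z)
        + ∫ z in {z : E | 1 < ‖z‖}, g z * J z := by
        congr 1
        rw [← integral_add (hIsubl.mono_set Set.inter_subset_right) hIℓ]
        apply integral_congr_ae
        filter_upwards with z
        ring
    _ = (∫ z in Aε, (g z - ℓ z) * J z) + ∫ z in {z : E | 1 < ‖z‖}, g z * J z := by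
        rw [hodd]; ring
    _ = (∫ z in {z : E | ‖z‖ ≤ 1},
          Set.indicator {z : E | ε ≤ ‖z‖} (fun z => (g z - ℓ z) * J z) z)
        + ∫ z in {z : E | 1 < ‖z‖}, g z * J z := by
        congr 1
        rw [setIntegral_indicator hSm, hAε, Set.inter_comm]



lemma aux_cov (x : E) (g : E → ℝ) : ∫ y, g (x - y) = ∫ z, g z :=
  (Measure.measurePreserving_sub_left volume x).integral_comp
    (MeasurableEquiv.subLeft x).measurableEmbedding g

lemma aux_cov_lintegral (x : E) (g : E → ℝ≥0∞) : ∫⁻ y, g (x - y) = ∫⁻ z, g z :=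
  (Measure.measurePreserving_sub_left volume x).lintegral_comp_emb
    (MeasurableEquiv.subLeft x).measurableEmbedding g

/-- Integrability of `p ↦ u p.1 * ((v p.1 - v p.2) * W (p.1 - p.2))` on the product. -/
lemma aux_A_integrable {W u v : E → ℝ} (hWm : Measurable W) (hWnn : ∀ z, 0 ≤ W z)
    (hWfin : ∫⁻ z, ENNReal.ofReal (W z) < ⊤)
    (hum : Measurable u) (huI : Integrable u (volume : Measure E)) (hvm : Measurable v)
    {Mv : ℝ} (hMv : ∀ x, |v x| ≤ Mv) :
    Integrable (fun p : E × E => u p.1 * ((v p.1 - v p.2) * W (p.1 - p.2)))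
      ((volume : Measure E).prod (volume : Measure E)) := by
  have hMv0 : 0 ≤ Mv := le_trans (abs_nonneg _) (hMv 0)
  have hsub : Measurable fun p : E × E => p.1 - p.2 := measurable_fst.sub measurable_snd
  have hWp : Measurable fun p : E × E => W (p.1 - p.2) := hWm.comp hsub
  have hAm : Measurable fun p : E × E => u p.1 * ((v p.1 - v p.2) * W (p.1 - p.2)) :=
    (hum.comp measurable_fst).mul
      (((hvm.comp measurable_fst).sub (hvm.comp measurable_snd)).mul hWp)
  refine ⟨hAm.aestronglyMeasurable, ?_⟩
  rw [hasFiniteIntegral_iff_norm]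
  have hg : AEMeasurable (fun p : E × E => ENNReal.ofReal (|u p.1| * (2 * Mv * W (p.1 - p.2))))
      ((volume : Measure E).prod (volume : Measure E)) := by fun_prop
  calc ∫⁻ p, ENNReal.ofReal ‖u p.1 * ((v p.1 - v p.2) * W (p.1 - p.2))‖ ∂(volume : Measure E).prod (volume : Measure E)
      ≤ ∫⁻ p, ENNReal.ofReal (|u p.1| * (2 * Mv * W (p.1 - p.2)))
          ∂(volume : Measure E).prod (volume : Measure E) := by
        apply lintegral_mono
        intro p
        apply ENNReal.ofReal_le_ofReal
        rw [Real.norm_eq_abs]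
        have h2 : |v p.1 - v p.2| ≤ 2 * Mv := by
          calc |v p.1 - v p.2| ≤ |v p.1| + |v p.2| := abs_sub _ _
            _ ≤ 2 * Mv := by have := hMv p.1; have := hMv p.2; linarith
        calc |u p.1 * ((v p.1 - v p.2) * W (p.1 - p.2))|
            = |u p.1| * (|v p.1 - v p.2| * W (p.1 - p.2)) := by
              rw [abs_mul, abs_mul, abs_of_nonneg (hWnn _)]
          _ ≤ |u p.1| * (2 * Mv * W (p.1 - p.2)) :=
              mul_le_mul_of_nonneg_left
                (mul_le_mul_of_nonneg_right h2 (hWnn _)) (abs_nonneg _)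
    _ = ∫⁻ x, ∫⁻ y, ENNReal.ofReal (|u x| * (2 * Mv * W (x - y))) := lintegral_prod _ hg
    _ = ∫⁻ x, ENNReal.ofReal |u x| * (ENNReal.ofReal (2 * Mv) * ∫⁻ z, ENNReal.ofReal (W z)) := by
        apply lintegral_congr
        intro x
        rw [← aux_cov_lintegral x (fun z => ENNReal.ofReal (W z))]
        rw [← lintegral_const_mul' _ _ (by finiteness), ← lintegral_const_mul' _ _ (by simp)]
        apply lintegral_congr
        intro y
        rw [← ENNReal.ofReal_mul (by positivity), ← ENNReal.ofReal_mul (abs_nonneg _)]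
    _ = (ENNReal.ofReal (2 * Mv) * ∫⁻ z, ENNReal.ofReal (W z)) * ∫⁻ x, ENNReal.ofReal |u x| := by
        rw [lintegral_mul_const' _ _ (by finiteness), mul_comm]
    _ < ⊤ := by
        apply ENNReal.mul_lt_top (by finiteness)
        have := huI.2
        rw [hasFiniteIntegral_iff_norm] at this
        simpa [Real.norm_eq_abs] using this

lemma aux_sym {W u v : E → ℝ} (hWm : Measurable W) (hWnn : ∀ z, 0 ≤ W z)
    (hWev : ∀ z, W (-z) = W z) (hWfin : ∫⁻ z, ENNReal.ofReal (W z) < ⊤)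
    (hum : Measurable u) (huI : Integrable u (volume : Measure E)) (hvm : Measurable v)
    {Mv : ℝ} (hMv : ∀ x, |v x| ≤ Mv) :
    ∫ p : E × E, (u p.1 - u p.2) * (v p.1 - v p.2) * W (p.1 - p.2)
        ∂((volume : Measure E).prod (volume : Measure E))
      = 2 * ∫ x, u x * ∫ z, (v x - v (x - z)) * W z := by
  set P := (volume : Measure E).prod (volume : Measure E) with hP
  set A : E × E → ℝ := fun p => u p.1 * ((v p.1 - v p.2) * W (p.1 - p.2)) with hA
  set B : E × E → ℝ := fun p => u p.2 * ((v p.1 - v p.2) * W (p.1 - p.2)) with hB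
  have hAI : Integrable A P := aux_A_integrable hWm hWnn hWfin hum huI hvm hMv
  have hBswap : B = fun p : E × E => -(A (Prod.swap p)) := by
    funext p
    simp only [hA, hB, Prod.swap]
    have h1 : W (p.2 - p.1) = W (p.1 - p.2) := by rw [← hWev, neg_sub]
    rw [h1]; ring
  have hBI : Integrable B P := by
    rw [hBswap]
    exact (hAI.swap).neg
  have hIB : ∫ p, B p ∂P = -∫ p, A p ∂P := by
    rw [hBswap]
    rw [integral_neg]
    congr 1
    exact integral_prod_swap A
  have hsplit : ∀ p : E × E, (u p.1 - u p.2) * (v p.1 - v p.2) * W (p.1 - p.2) = A p - B p := by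
    intro p; simp only [hA, hB]; ring
  calc ∫ p : E × E, (u p.1 - u p.2) * (v p.1 - v p.2) * W (p.1 - p.2) ∂P
      = ∫ p, (A p - B p) ∂P := by apply integral_congr_ae; filter_upwards with p using hsplit p
    _ = ∫ p, A p ∂P - ∫ p, B p ∂P := integral_sub hAI hBI
    _ = 2 * ∫ p, A p ∂P := by rw [hIB]; ring
    _ = 2 * ∫ x, ∫ y, A (x, y) := by rw [integral_prod A hAI]
    _ = 2 * ∫ x, u x * ∫ z, (v x - v (x - z)) * W z := by
        congr 1
        apply integral_congr_ae
        filter_upwards with x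
        simp only [hA]
        rw [integral_const_mul]
        congr 1
        rw [← aux_cov x (fun z => (v x - v (x - z)) * W z)]
        apply integral_congr_ae
        filter_upwards with y
        simp only [_root_.sub_sub_cancel]



lemma aux_cov_lintegral' (x : E) (g : E → ℝ≥0∞) : ∫⁻ y, g (x - y) = ∫⁻ z, g z :=
  (Measure.measurePreserving_sub_left volume x).lintegral_comp_emb
    (MeasurableEquiv.subLeft x).measurableEmbedding g

lemma aux_Qv_prod {J v : E → ℝ} (hJmeas : Measurable J) (hJnonneg : ∀ z, 0 ≤ J z)
    (hJ1a : ∫⁻ z in {z : E | 1 ≤ ‖z‖}, ENNReal.ofReal (J z) < ⊤)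
    (hJ1b : ∫⁻ z in {z : E | ‖z‖ ≤ 1}, ENNReal.ofReal (‖z‖ ^ 2 * J z) < ⊤)
    (hvc : Continuous v) (hvs : HasCompactSupport v)
    {Mv : ℝ} (hMv : ∀ x, |v x| ≤ Mv) {Lv : NNReal} (hLv : LipschitzWith Lv v) :
    ∫⁻ p : E × E, ENNReal.ofReal ((v p.1 - v p.2) ^ 2 * J (p.1 - p.2))
      ∂((volume : Measure E).prod (volume : Measure E)) < ⊤ := by
  set Kv := tsupport v with hKv
  have hKvm : MeasurableSet Kv := (isClosed_tsupport v).measurableSet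
  have hKvol : volume Kv < ⊤ := hvs.measure_lt_top
  set m : E → ℝ := fun z => min (((Lv : ℝ) * ‖z‖) ^ 2) ((2 * Mv) ^ 2) with hm
  have hbound : ∀ z x : E, (v x - v (x - z)) ^ 2 ≤ m z := by
    intro z x
    apply le_min
    · have h1 : |v x - v (x - z)| ≤ (Lv : ℝ) * ‖z‖ := by
        have := hLv.dist_le_mul x (x - z)
        rw [dist_eq_norm, dist_eq_norm] at this
        simpa [_root_.sub_sub_cancel] using this
      calc (v x - v (x - z)) ^ 2 = |v x - v (x - z)| ^ 2 := (sq_abs _).symm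
        _ ≤ ((Lv : ℝ) * ‖z‖) ^ 2 := by
            apply pow_le_pow_left₀ (abs_nonneg _) h1
    · have h1 : |v x - v (x - z)| ≤ 2 * Mv := by
        calc |v x - v (x - z)| ≤ |v x| + |v (x - z)| := abs_sub _ _
          _ ≤ 2 * Mv := by have := hMv x; have := hMv (x - z); linarith
      calc (v x - v (x - z)) ^ 2 = |v x - v (x - z)| ^ 2 := (sq_abs _).symm
        _ ≤ (2 * Mv) ^ 2 := by apply pow_le_pow_left₀ (abs_nonneg _) h1
  have hm0 : ∀ z, 0 ≤ m z := fun z => le_min (by positivity) (by positivity)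
  set S : E → Set E := fun z => Kv ∪ (fun w => w - z) ⁻¹' Kv with hS
  have hSm : ∀ z, MeasurableSet (S z) :=
    fun z => hKvm.union ((measurable_id.sub measurable_const) hKvm)
  have hSvol : ∀ z, volume (S z) ≤ 2 * volume Kv := by
    intro z
    calc volume (S z) ≤ volume Kv + volume ((fun w => w - z) ⁻¹' Kv) := measure_union_le _ _
      _ = volume Kv + volume Kv := by
          rw [(measurePreserving_sub_right volume z).measure_preimage hKvm.nullMeasurableSet]
      _ = 2 * volume Kv := by ring
  have hzero : ∀ z x : E, x ∉ S z → v x - v (x - z) = 0 := by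
    intro z x hx
    simp only [hS, Set.mem_union, Set.mem_preimage] at hx
    push_neg at hx
    rw [image_eq_zero_of_notMem_tsupport hx.1, image_eq_zero_of_notMem_tsupport hx.2, sub_zero]
  have hmeas2 : AEMeasurable
      (fun p : E × E => ENNReal.ofReal ((v p.1 - v p.2) ^ 2 * J (p.1 - p.2)))
      ((volume : Measure E).prod (volume : Measure E)) := by
    apply Measurable.aemeasurable
    apply ENNReal.measurable_ofReal.comp
    exact ((((hvc.measurable.comp measurable_fst).sub
      (hvc.measurable.comp measurable_snd)).pow_const 2).mul
      (hJmeas.comp (measurable_fst.sub measurable_snd)))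
  have hFm : Measurable (Function.uncurry fun x z : E =>
      ENNReal.ofReal ((v x - v (x - z)) ^ 2 * J z)) := by
    apply ENNReal.measurable_ofReal.comp
    exact ((((hvc.measurable.comp measurable_fst).sub
      (hvc.measurable.comp (measurable_fst.sub measurable_snd))).pow_const 2).mul
      (hJmeas.comp measurable_snd))
  calc ∫⁻ p : E × E, ENNReal.ofReal ((v p.1 - v p.2) ^ 2 * J (p.1 - p.2))
        ∂((volume : Measure E).prod (volume : Measure E))
      = ∫⁻ x, ∫⁻ y, ENNReal.ofReal ((v x - v y) ^ 2 * J (x - y)) := lintegral_prod _ hmeas2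
    _ = ∫⁻ x, ∫⁻ z, ENNReal.ofReal ((v x - v (x - z)) ^ 2 * J z) := by
        apply lintegral_congr
        intro x
        rw [← aux_cov_lintegral' x (fun z => ENNReal.ofReal ((v x - v (x - z)) ^ 2 * J z))]
        apply lintegral_congr
        intro y
        simp only [_root_.sub_sub_cancel]
    _ = ∫⁻ z, ∫⁻ x, ENNReal.ofReal ((v x - v (x - z)) ^ 2 * J z) :=
        lintegral_lintegral_swap hFm.aemeasurable
    _ ≤ ∫⁻ z, (2 * volume Kv) * (ENNReal.ofReal (m z) * ENNReal.ofReal (J z)) := by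
        apply lintegral_mono
        intro z
        calc ∫⁻ x, ENNReal.ofReal ((v x - v (x - z)) ^ 2 * J z)
            = ∫⁻ x, ENNReal.ofReal ((v x - v (x - z)) ^ 2) * ENNReal.ofReal (J z) := by
              apply lintegral_congr
              intro x
              rw [← ENNReal.ofReal_mul (sq_nonneg _)]
          _ = (∫⁻ x, ENNReal.ofReal ((v x - v (x - z)) ^ 2)) * ENNReal.ofReal (J z) :=
              lintegral_mul_const' _ _ ENNReal.ofReal_ne_top
          _ ≤ (ENNReal.ofReal (m z) * (2 * volume Kv)) * ENNReal.ofReal (J z) := by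
              apply mul_le_mul_left
              calc ∫⁻ x, ENNReal.ofReal ((v x - v (x - z)) ^ 2)
                  ≤ ∫⁻ x, (S z).indicator (fun _ => ENNReal.ofReal (m z)) x := by
                    apply lintegral_mono
                    intro x
                    by_cases hx : x ∈ S z
                    · rw [Set.indicator_of_mem hx]
                      exact ENNReal.ofReal_le_ofReal (hbound z x)
                    · rw [Set.indicator_of_notMem hx]
                      have h0 := hzero z x hx
                      simp [h0]
                _ = ENNReal.ofReal (m z) * volume (S z) := lintegral_indicator_const (hSm z) _
                _ ≤ ENNReal.ofReal (m z) * (2 * volume Kv) :=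
                    mul_le_mul_right (hSvol z) _
          _ = (2 * volume Kv) * (ENNReal.ofReal (m z) * ENNReal.ofReal (J z)) := by ring
    _ = (2 * volume Kv) * ∫⁻ z, ENNReal.ofReal (m z) * ENNReal.ofReal (J z) := by
        rw [lintegral_const_mul' _ _ (by finiteness)]
    _ < ⊤ := by
        apply ENNReal.mul_lt_top (by finiteness)
        have ht1m : MeasurableSet {z : E | ‖z‖ ≤ 1} := measurableSet_le measurable_norm
          measurable_const
        rw [← lintegral_add_compl _ ht1m]
        apply ENNReal.add_lt_top.2
        constructor
        · calc ∫⁻ z in {z : E | ‖z‖ ≤ 1}, ENNReal.ofReal (m z) * ENNReal.ofReal (J z)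
              ≤ ∫⁻ z in {z : E | ‖z‖ ≤ 1},
                  ENNReal.ofReal ((Lv : ℝ) ^ 2) * ENNReal.ofReal (‖z‖ ^ 2 * J z) := by
                apply setLIntegral_mono
                  (measurable_const.mul (ENNReal.measurable_ofReal.comp
                    ((measurable_norm.pow_const 2).mul hJmeas)))
                intro z _
                calc ENNReal.ofReal (m z) * ENNReal.ofReal (J z)
                    = ENNReal.ofReal (m z * J z) := (ENNReal.ofReal_mul (hm0 z)).symm
                  _ ≤ ENNReal.ofReal ((Lv : ℝ) ^ 2 * (‖z‖ ^ 2 * J z)) := by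
                      apply ENNReal.ofReal_le_ofReal
                      calc m z * J z ≤ ((Lv : ℝ) * ‖z‖) ^ 2 * J z :=
                            mul_le_mul_of_nonneg_right (min_le_left _ _) (hJnonneg z)
                        _ = (Lv : ℝ) ^ 2 * (‖z‖ ^ 2 * J z) := by ring
                  _ = ENNReal.ofReal ((Lv : ℝ) ^ 2) * ENNReal.ofReal (‖z‖ ^ 2 * J z) :=
                      ENNReal.ofReal_mul (by positivity)
              _ < ⊤ := by
                rw [lintegral_const_mul' _ _ ENNReal.ofReal_ne_top]
                exact ENNReal.mul_lt_top ENNReal.ofReal_lt_top hJ1b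
        · have hcompl : {z : E | ‖z‖ ≤ 1}ᶜ ⊆ {z : E | 1 ≤ ‖z‖} := by
            intro z hz
            simp only [Set.mem_compl_iff, Set.mem_setOf_eq, not_le] at hz
            exact le_of_lt hz
          calc ∫⁻ z in {z : E | ‖z‖ ≤ 1}ᶜ, ENNReal.ofReal (m z) * ENNReal.ofReal (J z)
              ≤ ∫⁻ z in {z : E | 1 ≤ ‖z‖}, ENNReal.ofReal (m z) * ENNReal.ofReal (J z) :=
                lintegral_mono_set hcompl
            _ ≤ ∫⁻ z in {z : E | 1 ≤ ‖z‖},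
                  ENNReal.ofReal ((2 * Mv) ^ 2) * ENNReal.ofReal (J z) := by
                apply setLIntegral_mono
                  (measurable_const.mul (ENNReal.measurable_ofReal.comp hJmeas))
                intro z _
                exact mul_le_mul_left (ENNReal.ofReal_le_ofReal (min_le_right _ _)) _
            _ < ⊤ := by
                rw [lintegral_const_mul' _ _ ENNReal.ofReal_ne_top]
                exact ENNReal.mul_lt_top ENNReal.ofReal_lt_top hJ1a


end Aux


/-- `𝒥(u,v) = ∫ u · Iv` for `v ∈ C²_c(ℝᴺ)` and `u ∈ 𝒟(Ω) ∩ L²(Ω)`. -/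
theorem Jbil_eq_integral_Iop
    (N : ℕ) (J : EuclideanSpace ℝ (Fin N) → ℝ)
    (hJmeas : Measurable J) (hJnonneg : ∀ z, 0 ≤ J z)
    (hJeven : ∀ z, J (-z) = J z)
    (hJ1a : ∫⁻ z in {z | 1 ≤ ‖z‖}, ENNReal.ofReal (J z) < ⊤)
    (hJ1b : ∫⁻ z in {z | ‖z‖ ≤ 1}, ENNReal.ofReal (‖z‖ ^ 2 * J z) < ⊤)
    (hJinf : ∫⁻ z, ENNReal.ofReal (J z) = ⊤)
    (Ω : Set (EuclideanSpace ℝ (Fin N)))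
    (hΩo : IsOpen Ω) (hΩb : Bornology.IsBounded Ω)
    (v : EuclideanSpace ℝ (Fin N) → ℝ)
    (hv : ContDiff ℝ 2 v) (hvs : HasCompactSupport v)
    (u : EuclideanSpace ℝ (Fin N) → ℝ)
    (hu : u ∈ calD N J Ω) (huL2 : MemLp u 2 volume) :
    Jbil N J u v = ∫ x, u x * Iop N J v x := by
  obtain ⟨hum, hQu, hsupp⟩ := hu
  rcases Nat.eq_zero_or_pos N with hN0 | hN
  · -- degenerate case N = 0 : contradiction with (J1)
    exfalso
    subst hN0
    have hz : ∀ z : EuclideanSpace ℝ (Fin 0), z = 0 := by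
      intro z; ext i; exact absurd i.2 (Nat.not_lt_zero _)
    have h1 : ∫⁻ z, ENNReal.ofReal (J z)
        = ENNReal.ofReal (J 0) * (volume : Measure (EuclideanSpace ℝ (Fin 0))) Set.univ := by
      calc ∫⁻ z, ENNReal.ofReal (J z) = ∫⁻ _z : EuclideanSpace ℝ (Fin 0), ENNReal.ofReal (J 0) :=
            lintegral_congr (fun z => by rw [hz z])
        _ = ENNReal.ofReal (J 0) * (volume : Measure (EuclideanSpace ℝ (Fin 0))) Set.univ :=
            lintegral_const _
    rw [hJinf, aux_vol_univ_zero, mul_one] at h1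
    exact ENNReal.ofReal_ne_top h1.symm
  -- basic facts about v
  have hvc := hv.continuous
  have hvm := hvc.measurable
  obtain ⟨Mv, hMvn⟩ := hvc.bounded_above_of_compact_support hvs
  have hMv : ∀ y, |v y| ≤ Mv := fun y => by rw [← Real.norm_eq_abs]; exact hMvn y
  have hd : Differentiable ℝ v := hv.differentiable (by norm_num)
  have hvf : ContDiff ℝ 1 (fderiv ℝ v) := hv.fderiv_right (by norm_num)
  obtain ⟨K₂, hlip⟩ := ContDiff.lipschitzWith_of_hasCompactSupport (hvs.fderiv ℝ) hvf (by norm_num)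
  obtain ⟨D, hDn⟩ := hvf.continuous.bounded_above_of_compact_support (hvs.fderiv ℝ)
  obtain ⟨Lv, hLv⟩ := ContDiff.lipschitzWith_of_hasCompactSupport hvs hv (by norm_num)
  -- u is integrable
  have hΩvol : volume Ω ≠ ⊤ := hΩb.measure_lt_top.ne
  have huInt : Integrable u volume := memLp_one_iff_integrable.mp
    (huL2.mono_exponent_of_measure_support_ne_top hsupp hΩvol (by norm_num))
  -- truncated kernels
  have hSm : ∀ ε : ℝ, MeasurableSet {z : EuclideanSpace ℝ (Fin N) | ε ≤ ‖z‖} :=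
    fun ε => measurableSet_le measurable_const measurable_norm
  have hWm : ∀ ε : ℝ, Measurable (Set.indicator {z : EuclideanSpace ℝ (Fin N) | ε ≤ ‖z‖} J) :=
    fun ε => hJmeas.indicator (hSm ε)
  have hWnn : ∀ (ε : ℝ) z, 0 ≤ Set.indicator {z : EuclideanSpace ℝ (Fin N) | ε ≤ ‖z‖} J z :=
    fun ε z => Set.indicator_nonneg (fun w _ => hJnonneg w) z
  have hWev : ∀ (ε : ℝ) z,
      Set.indicator {z : EuclideanSpace ℝ (Fin N) | ε ≤ ‖z‖} J (-z)
        = Set.indicator {z : EuclideanSpace ℝ (Fin N) | ε ≤ ‖z‖} J z := by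
    intro ε z
    simp only [Set.indicator_apply, Set.mem_setOf_eq, norm_neg, hJeven]
  have hWfin : ∀ ε : ℝ, 0 < ε →
      ∫⁻ z, ENNReal.ofReal (Set.indicator {z : EuclideanSpace ℝ (Fin N) | ε ≤ ‖z‖} J z) < ⊤ := by
    intro ε hε
    have h1 : ∀ z, ENNReal.ofReal (Set.indicator {z : EuclideanSpace ℝ (Fin N) | ε ≤ ‖z‖} J z)
        = Set.indicator {z : EuclideanSpace ℝ (Fin N) | ε ≤ ‖z‖}
            (fun z => ENNReal.ofReal (J z)) z := by
      intro z
      simp only [Set.indicator_apply]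
      split_ifs <;> simp
    rw [lintegral_congr h1, lintegral_indicator (hSm ε)]
    exact aux_Jfin hJmeas hJnonneg hJ1a hJ1b hε
  -- a.e. nonvanishing
  have hae0 : ∀ᵐ z : EuclideanSpace ℝ (Fin N) ∂volume, z ≠ 0 := by
    have hset : {z : EuclideanSpace ℝ (Fin N) | ¬ z ≠ 0} = {0} := by ext z; simp
    rw [ae_iff, hset]
    exact aux_vol_singleton hN 0
  -- measurability of inner functions
  have hgm : ∀ x : EuclideanSpace ℝ (Fin N),
      Measurable (fun z => (v x - v (x - z) - fderiv ℝ v x z) * J z) := fun x =>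
    ((measurable_const.sub (hvm.comp (measurable_const.sub measurable_id))).sub
      (fderiv ℝ v x).continuous.measurable).mul hJmeas
  -- uniform bound
  have hIbd : ∀ ε ∈ Set.Ioc (0:ℝ) 1, ∀ x,
      |∫ z, (v x - v (x - z)) * Set.indicator {z : EuclideanSpace ℝ (Fin N) | ε ≤ ‖z‖} J z|
        ≤ (∫ z in {z : EuclideanSpace ℝ (Fin N) | ‖z‖ ≤ 1}, (K₂ : ℝ) * ‖z‖ ^ 2 * J z)
          + ∫ z in {z : EuclideanSpace ℝ (Fin N) | 1 < ‖z‖}, (2 * Mv) * J z := by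
    intro ε hε x
    rw [aux_decomp hJmeas hJnonneg hJeven hJ1a hJ1b hvc hMv hd hlip hDn x hε]
    apply le_trans (abs_add_le _ _)
    apply add_le_add
    · rw [← Real.norm_eq_abs]
      apply norm_integral_le_of_norm_le (aux_int_quad hJmeas hJnonneg hJ1b (K₂ : ℝ))
      apply Filter.Eventually.of_forall
      intro z
      by_cases hzm : z ∈ {z : EuclideanSpace ℝ (Fin N) | ε ≤ ‖z‖}
      · rw [Set.indicator_of_mem hzm, Real.norm_eq_abs]
        have ht := aux_taylor hd hlip x (x - z)
        rw [_root_.sub_sub_cancel] at ht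
        calc |(v x - v (x - z) - fderiv ℝ v x z) * J z|
            = |v x - v (x - z) - fderiv ℝ v x z| * J z := by
              rw [abs_mul, abs_of_nonneg (hJnonneg z)]
          _ ≤ ((K₂ : ℝ) * ‖z‖ ^ 2) * J z := mul_le_mul_of_nonneg_right ht (hJnonneg z)
          _ = (K₂ : ℝ) * ‖z‖ ^ 2 * J z := by ring
      · rw [Set.indicator_of_notMem hzm, norm_zero]
        exact mul_nonneg (mul_nonneg K₂.2 (sq_nonneg _)) (hJnonneg z)
    · rw [← Real.norm_eq_abs]
      apply norm_integral_le_of_norm_le (aux_int_tail hJmeas hJnonneg hJ1a (2 * Mv))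
      apply Filter.Eventually.of_forall
      intro z
      rw [Real.norm_eq_abs]
      calc |(v x - v (x - z)) * J z| = |v x - v (x - z)| * J z := by
            rw [abs_mul, abs_of_nonneg (hJnonneg z)]
        _ ≤ (2 * Mv) * J z := by
            apply mul_le_mul_of_nonneg_right _ (hJnonneg z)
            calc |v x - v (x - z)| ≤ |v x| + |v (x - z)| := abs_sub _ _
              _ ≤ 2 * Mv := by have := hMv x; have := hMv (x - z); linarith
  -- pointwise convergence of the truncated integrals
  have hItend : ∀ x, Tendsto
      (fun ε : ℝ => ∫ z, (v x - v (x - z)) *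
        Set.indicator {z : EuclideanSpace ℝ (Fin N) | ε ≤ ‖z‖} J z)
      (nhdsWithin 0 (Set.Ioi 0))
      (nhds ((∫ z in {z : EuclideanSpace ℝ (Fin N) | ‖z‖ ≤ 1},
          (v x - v (x - z) - fderiv ℝ v x z) * J z)
        + ∫ z in {z : EuclideanSpace ℝ (Fin N) | 1 < ‖z‖}, (v x - v (x - z)) * J z)) := by
    intro x
    have h1 : Tendsto
        (fun ε : ℝ => ∫ z in {z : EuclideanSpace ℝ (Fin N) | ‖z‖ ≤ 1},
          Set.indicator {z : EuclideanSpace ℝ (Fin N) | ε ≤ ‖z‖}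
            (fun z => (v x - v (x - z) - fderiv ℝ v x z) * J z) z)
        (nhdsWithin 0 (Set.Ioi 0))
        (nhds (∫ z in {z : EuclideanSpace ℝ (Fin N) | ‖z‖ ≤ 1},
          (v x - v (x - z) - fderiv ℝ v x z) * J z)) := by
      apply tendsto_integral_filter_of_dominated_convergence
        (bound := fun z => (K₂ : ℝ) * ‖z‖ ^ 2 * J z)
      · apply Filter.Eventually.of_forall
        intro ε
        exact (((hgm x).indicator (hSm ε))).aestronglyMeasurable
      · apply Filter.Eventually.of_forall
        intro ε
        apply Filter.Eventually.of_forall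
        intro z
        by_cases hzm : z ∈ {z : EuclideanSpace ℝ (Fin N) | ε ≤ ‖z‖}
        · rw [Set.indicator_of_mem hzm, Real.norm_eq_abs]
          have ht := aux_taylor hd hlip x (x - z)
          rw [_root_.sub_sub_cancel] at ht
          calc |(v x - v (x - z) - fderiv ℝ v x z) * J z|
              = |v x - v (x - z) - fderiv ℝ v x z| * J z := by
                rw [abs_mul, abs_of_nonneg (hJnonneg z)]
            _ ≤ ((K₂ : ℝ) * ‖z‖ ^ 2) * J z := mul_le_mul_of_nonneg_right ht (hJnonneg z)
            _ = (K₂ : ℝ) * ‖z‖ ^ 2 * J z := by ring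
        · rw [Set.indicator_of_notMem hzm, norm_zero]
          exact mul_nonneg (mul_nonneg K₂.2 (sq_nonneg _)) (hJnonneg z)
      · exact aux_int_quad hJmeas hJnonneg hJ1b (K₂ : ℝ)
      · apply ae_restrict_of_ae
        filter_upwards [hae0] with z hz
        apply Tendsto.congr' _ tendsto_const_nhds
        have hpos : 0 < ‖z‖ := norm_pos_iff.mpr hz
        filter_upwards [Ioo_mem_nhdsGT_of_mem (Set.left_mem_Ico.mpr hpos)] with ε hε
        rw [Set.indicator_of_mem]
        exact le_of_lt hε.2
    have h2 := h1.add_const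
      (∫ z in {z : EuclideanSpace ℝ (Fin N) | 1 < ‖z‖}, (v x - v (x - z)) * J z)
    apply Tendsto.congr' _ h2
    filter_upwards [Ioc_mem_nhdsGT_of_mem (Set.left_mem_Ico.mpr one_pos)] with ε hε
    exact (aux_decomp hJmeas hJnonneg hJeven hJ1a hJ1b hvc hMv hd hlip hDn x hε).symm
  -- identification of Iop
  have hIopIv : ∀ x, Iop N J v x
      = (∫ z in {z : EuclideanSpace ℝ (Fin N) | ‖z‖ ≤ 1},
          (v x - v (x - z) - fderiv ℝ v x z) * J z)
        + ∫ z in {z : EuclideanSpace ℝ (Fin N) | 1 < ‖z‖}, (v x - v (x - z)) * J z := by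
    intro x
    apply Filter.Tendsto.limUnder_eq
    apply Tendsto.congr' _ (hItend x)
    filter_upwards [self_mem_nhdsWithin] with ε hε
    have hset : MeasurableSet {y : EuclideanSpace ℝ (Fin N) | ε ≤ ‖x - y‖} :=
      measurableSet_le measurable_const ((measurable_const.sub measurable_id).norm)
    calc ∫ z, (v x - v (x - z)) *
          Set.indicator {z : EuclideanSpace ℝ (Fin N) | ε ≤ ‖z‖} J z
        = ∫ y, (v x - v y) *
            Set.indicator {z : EuclideanSpace ℝ (Fin N) | ε ≤ ‖z‖} J (x - y) := by
          rw [← aux_cov x (fun z => (v x - v (x - z)) *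
            Set.indicator {z : EuclideanSpace ℝ (Fin N) | ε ≤ ‖z‖} J z)]
          apply integral_congr_ae
          filter_upwards with y
          simp only [_root_.sub_sub_cancel]
      _ = ∫ y, Set.indicator {y : EuclideanSpace ℝ (Fin N) | ε ≤ ‖x - y‖}
            (fun y => (v x - v y) * J (x - y)) y := by
          apply integral_congr_ae
          filter_upwards with y
          simp only [Set.indicator_apply, Set.mem_setOf_eq]
          by_cases h : ε ≤ ‖x - y‖ <;> simp [h]
      _ = ∫ y in {y | ε ≤ ‖x - y‖}, (v x - v y) * J (x - y) := integral_indicator hset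
  -- product measure and integrand
  have hQu' : ∫⁻ p : EuclideanSpace ℝ (Fin N) × EuclideanSpace ℝ (Fin N),
      ENNReal.ofReal ((u p.1 - u p.2) ^ 2 * J (p.1 - p.2))
      ∂((volume : Measure (EuclideanSpace ℝ (Fin N))).prod volume) < ⊤ := by
    have hmeas : AEMeasurable (fun p : EuclideanSpace ℝ (Fin N) × EuclideanSpace ℝ (Fin N) =>
        ENNReal.ofReal ((u p.1 - u p.2) ^ 2 * J (p.1 - p.2)))
        ((volume : Measure (EuclideanSpace ℝ (Fin N))).prod volume) := by
      apply Measurable.aemeasurable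
      exact ENNReal.measurable_ofReal.comp
        ((((hum.comp measurable_fst).sub (hum.comp measurable_snd)).pow_const 2).mul
          (hJmeas.comp (measurable_fst.sub measurable_snd)))
    rw [lintegral_prod _ hmeas]
    simp only [Jquad] at hQu
    by_contra hcon
    rw [not_lt, top_le_iff] at hcon
    rw [hcon, ENNReal.mul_top (by norm_num)] at hQu
    exact absurd hQu (lt_irrefl ⊤)
  have hQv' := aux_Qv_prod hJmeas hJnonneg hJ1a hJ1b hvc hvs hMv hLv
  have hfm : Measurable (fun p : EuclideanSpace ℝ (Fin N) × EuclideanSpace ℝ (Fin N) =>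
      (u p.1 - u p.2) * (v p.1 - v p.2) * J (p.1 - p.2)) :=
    (((hum.comp measurable_fst).sub (hum.comp measurable_snd)).mul
      ((hvm.comp measurable_fst).sub (hvm.comp measurable_snd))).mul
      (hJmeas.comp (measurable_fst.sub measurable_snd))
  have hfint : Integrable (fun p : EuclideanSpace ℝ (Fin N) × EuclideanSpace ℝ (Fin N) =>
      (u p.1 - u p.2) * (v p.1 - v p.2) * J (p.1 - p.2))
      ((volume : Measure (EuclideanSpace ℝ (Fin N))).prod volume) := by
    refine ⟨hfm.aestronglyMeasurable, ?_⟩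
    rw [hasFiniteIntegral_iff_norm]
    calc ∫⁻ p, ENNReal.ofReal ‖(u p.1 - u p.2) * (v p.1 - v p.2) * J (p.1 - p.2)‖
          ∂((volume : Measure (EuclideanSpace ℝ (Fin N))).prod volume)
        ≤ ∫⁻ p, (ENNReal.ofReal ((u p.1 - u p.2) ^ 2 * J (p.1 - p.2))
            + ENNReal.ofReal ((v p.1 - v p.2) ^ 2 * J (p.1 - p.2)))
          ∂((volume : Measure (EuclideanSpace ℝ (Fin N))).prod volume) := by
          apply lintegral_mono
          intro p
          dsimp only
          rw [Real.norm_eq_abs]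
          have hab : |(u p.1 - u p.2) * (v p.1 - v p.2)|
              ≤ (u p.1 - u p.2) ^ 2 + (v p.1 - v p.2) ^ 2 := by
            rw [abs_mul]
            nlinarith [sq_nonneg (|u p.1 - u p.2| - |v p.1 - v p.2|), sq_abs (u p.1 - u p.2),
              sq_abs (v p.1 - v p.2), abs_nonneg (u p.1 - u p.2), abs_nonneg (v p.1 - v p.2)]
          calc ENNReal.ofReal |(u p.1 - u p.2) * (v p.1 - v p.2) * J (p.1 - p.2)|
              ≤ ENNReal.ofReal ((u p.1 - u p.2) ^ 2 * J (p.1 - p.2)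
                  + (v p.1 - v p.2) ^ 2 * J (p.1 - p.2)) := by
                apply ENNReal.ofReal_le_ofReal
                calc |(u p.1 - u p.2) * (v p.1 - v p.2) * J (p.1 - p.2)|
                    = |(u p.1 - u p.2) * (v p.1 - v p.2)| * J (p.1 - p.2) := by
                      rw [abs_mul, abs_of_nonneg (hJnonneg _)]
                  _ ≤ ((u p.1 - u p.2) ^ 2 + (v p.1 - v p.2) ^ 2) * J (p.1 - p.2) :=
                      mul_le_mul_of_nonneg_right hab (hJnonneg _)
                  _ = (u p.1 - u p.2) ^ 2 * J (p.1 - p.2)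
                      + (v p.1 - v p.2) ^ 2 * J (p.1 - p.2) := by ring
            _ ≤ ENNReal.ofReal ((u p.1 - u p.2) ^ 2 * J (p.1 - p.2))
                + ENNReal.ofReal ((v p.1 - v p.2) ^ 2 * J (p.1 - p.2)) :=
              ENNReal.ofReal_add_le
      _ = (∫⁻ p, ENNReal.ofReal ((u p.1 - u p.2) ^ 2 * J (p.1 - p.2))
            ∂((volume : Measure (EuclideanSpace ℝ (Fin N))).prod volume))
          + ∫⁻ p, ENNReal.ofReal ((v p.1 - v p.2) ^ 2 * J (p.1 - p.2))
            ∂((volume : Measure (EuclideanSpace ℝ (Fin N))).prod volume) := by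
          apply lintegral_add_left
          exact ENNReal.measurable_ofReal.comp
            ((((hum.comp measurable_fst).sub (hum.comp measurable_snd)).pow_const 2).mul
              (hJmeas.comp (measurable_fst.sub measurable_snd)))
      _ < ⊤ := ENNReal.add_lt_top.2 ⟨hQu', hQv'⟩
  -- Jbil as a product integral
  have hJbil : Jbil N J u v = (1 / 2 : ℝ) *
      ∫ p : EuclideanSpace ℝ (Fin N) × EuclideanSpace ℝ (Fin N),
        (u p.1 - u p.2) * (v p.1 - v p.2) * J (p.1 - p.2)
        ∂((volume : Measure (EuclideanSpace ℝ (Fin N))).prod volume) := by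
    simp only [Jbil]
    congr 1
    exact integral_integral hfint
  -- DCT on the product space
  have hDCT1 : Tendsto (fun ε : ℝ =>
      ∫ p : EuclideanSpace ℝ (Fin N) × EuclideanSpace ℝ (Fin N),
        (u p.1 - u p.2) * (v p.1 - v p.2) *
          Set.indicator {z : EuclideanSpace ℝ (Fin N) | ε ≤ ‖z‖} J (p.1 - p.2)
        ∂((volume : Measure (EuclideanSpace ℝ (Fin N))).prod volume))
      (nhdsWithin 0 (Set.Ioi 0))
      (nhds (∫ p : EuclideanSpace ℝ (Fin N) × EuclideanSpace ℝ (Fin N),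
        (u p.1 - u p.2) * (v p.1 - v p.2) * J (p.1 - p.2)
        ∂((volume : Measure (EuclideanSpace ℝ (Fin N))).prod volume))) := by
    apply tendsto_integral_filter_of_dominated_convergence
      (bound := fun p => |(u p.1 - u p.2) * (v p.1 - v p.2) * J (p.1 - p.2)|)
    · apply Filter.Eventually.of_forall
      intro ε
      exact ((((hum.comp measurable_fst).sub (hum.comp measurable_snd)).mul
        ((hvm.comp measurable_fst).sub (hvm.comp measurable_snd))).mul
        ((hWm ε).comp (measurable_fst.sub measurable_snd))).aestronglyMeasurable
    · apply Filter.Eventually.of_forall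
      intro ε
      apply Filter.Eventually.of_forall
      intro p
      rw [Real.norm_eq_abs]
      calc |(u p.1 - u p.2) * (v p.1 - v p.2) *
            Set.indicator {z : EuclideanSpace ℝ (Fin N) | ε ≤ ‖z‖} J (p.1 - p.2)|
          = |(u p.1 - u p.2) * (v p.1 - v p.2)| *
            Set.indicator {z : EuclideanSpace ℝ (Fin N) | ε ≤ ‖z‖} J (p.1 - p.2) := by
            rw [abs_mul, abs_of_nonneg (hWnn ε _)]
        _ ≤ |(u p.1 - u p.2) * (v p.1 - v p.2)| * J (p.1 - p.2) :=
            mul_le_mul_of_nonneg_left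
              (Set.indicator_le_self' (fun w _ => hJnonneg w) (p.1 - p.2)) (abs_nonneg _)
        _ = |(u p.1 - u p.2) * (v p.1 - v p.2) * J (p.1 - p.2)| := by
            symm
            rw [abs_mul, abs_of_nonneg (hJnonneg _)]
    · exact hfint.abs
    · have hdiag : ∀ᵐ p : EuclideanSpace ℝ (Fin N) × EuclideanSpace ℝ (Fin N)
          ∂((volume : Measure (EuclideanSpace ℝ (Fin N))).prod volume), p.1 ≠ p.2 := by
        have hset : {p : EuclideanSpace ℝ (Fin N) × EuclideanSpace ℝ (Fin N) | ¬ p.1 ≠ p.2}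
            = {p | p.1 = p.2} := by ext p; simp
        rw [ae_iff, hset]
        exact aux_diag hN
      filter_upwards [hdiag] with p hp
      apply Tendsto.congr' _ tendsto_const_nhds
      have hpos : 0 < ‖p.1 - p.2‖ := norm_pos_iff.mpr (sub_ne_zero_of_ne hp)
      filter_upwards [Ioo_mem_nhdsGT_of_mem (Set.left_mem_Ico.mpr hpos)] with ε hε
      rw [Set.indicator_of_mem]
      exact le_of_lt hε.2
  -- symmetrisation for each ε
  have hsym : ∀ ε : ℝ, 0 < ε →
      ∫ p : EuclideanSpace ℝ (Fin N) × EuclideanSpace ℝ (Fin N),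
        (u p.1 - u p.2) * (v p.1 - v p.2) *
          Set.indicator {z : EuclideanSpace ℝ (Fin N) | ε ≤ ‖z‖} J (p.1 - p.2)
        ∂((volume : Measure (EuclideanSpace ℝ (Fin N))).prod volume)
      = 2 * ∫ x, u x * ∫ z, (v x - v (x - z)) *
          Set.indicator {z : EuclideanSpace ℝ (Fin N) | ε ≤ ‖z‖} J z :=
    fun ε hε => aux_sym (hWm ε) (hWnn ε) (hWev ε) (hWfin ε hε) hum huInt hvm hMv
  -- strong measurability of the truncated operator
  have hIεsm : ∀ ε : ℝ, StronglyMeasurable (fun x => ∫ z, (v x - v (x - z)) *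
      Set.indicator {z : EuclideanSpace ℝ (Fin N) | ε ≤ ‖z‖} J z) := by
    intro ε
    apply StronglyMeasurable.integral_prod_right'
      (f := fun q : EuclideanSpace ℝ (Fin N) × EuclideanSpace ℝ (Fin N) =>
        (v q.1 - v (q.1 - q.2)) * Set.indicator {z : EuclideanSpace ℝ (Fin N) | ε ≤ ‖z‖} J q.2)
    apply Measurable.stronglyMeasurable
    exact ((hvm.comp measurable_fst).sub
      (hvm.comp (measurable_fst.sub measurable_snd))).mul ((hWm ε).comp measurable_snd)
  -- DCT for the right-hand side
  have hDCT2 : Tendsto (fun ε : ℝ => ∫ x, u x * ∫ z, (v x - v (x - z)) *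
      Set.indicator {z : EuclideanSpace ℝ (Fin N) | ε ≤ ‖z‖} J z)
      (nhdsWithin 0 (Set.Ioi 0))
      (nhds (∫ x, u x *
        ((∫ z in {z : EuclideanSpace ℝ (Fin N) | ‖z‖ ≤ 1},
          (v x - v (x - z) - fderiv ℝ v x z) * J z)
        + ∫ z in {z : EuclideanSpace ℝ (Fin N) | 1 < ‖z‖}, (v x - v (x - z)) * J z))) := by
    apply tendsto_integral_filter_of_dominated_convergence
      (bound := fun x => |u x| * ((∫ z in {z : EuclideanSpace ℝ (Fin N) | ‖z‖ ≤ 1},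
        (K₂ : ℝ) * ‖z‖ ^ 2 * J z)
        + ∫ z in {z : EuclideanSpace ℝ (Fin N) | 1 < ‖z‖}, (2 * Mv) * J z))
    · apply Filter.Eventually.of_forall
      intro ε
      exact (hum.stronglyMeasurable.mul (hIεsm ε)).aestronglyMeasurable
    · filter_upwards [Ioc_mem_nhdsGT_of_mem (Set.left_mem_Ico.mpr one_pos)] with ε hε
      apply Filter.Eventually.of_forall
      intro x
      rw [Real.norm_eq_abs, abs_mul]
      exact mul_le_mul_of_nonneg_left (hIbd ε hε x) (abs_nonneg _)
    · exact huInt.abs.mul_const _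
    · apply Filter.Eventually.of_forall
      intro x
      exact (hItend x).const_mul (u x)
  -- combine
  have hlim1 : Tendsto (fun ε : ℝ => 2 * ∫ x, u x * ∫ z, (v x - v (x - z)) *
      Set.indicator {z : EuclideanSpace ℝ (Fin N) | ε ≤ ‖z‖} J z)
      (nhdsWithin 0 (Set.Ioi 0))
      (nhds (∫ p : EuclideanSpace ℝ (Fin N) × EuclideanSpace ℝ (Fin N),
        (u p.1 - u p.2) * (v p.1 - v p.2) * J (p.1 - p.2)
        ∂((volume : Measure (EuclideanSpace ℝ (Fin N))).prod volume))) := by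
    apply Tendsto.congr' _ hDCT1
    filter_upwards [self_mem_nhdsWithin] with ε hε
    exact hsym ε hε
  have hlim2 := hDCT2.const_mul (2 : ℝ)
  have hkey := tendsto_nhds_unique hlim1 hlim2
  rw [hJbil, hkey]
  have hIop' : ∫ x, u x * Iop N J v x = ∫ x, u x *
      ((∫ z in {z : EuclideanSpace ℝ (Fin N) | ‖z‖ ≤ 1},
        (v x - v (x - z) - fderiv ℝ v x z) * J z)
      + ∫ z in {z : EuclideanSpace ℝ (Fin N) | 1 < ‖z‖}, (v x - v (x - z)) * J z) := by
    apply integral_congr_ae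
    filter_upwards with x
    rw [hIopIv x]
  rw [hIop']
  ring
end

section
/- Let U′ ⊂ ℝᴺ be open, J even nonnegative with ∫_{ℝᴺ\B_r(0)} J(z) dz < ∞ for every r > 0, and let v, φ ∈ L²(ℝᴺ) satisfy ρ(v,U′) < ∞ and ρ(φ,U′) < ∞ where ρ(w,U′) = ∬_{U′×U′} (w(x)−w(y))² J(x−y) dx dy. Suppose φ ≡ 0 on ℝᴺ \ U for some U ⊂ U′ with dist(U, ℝᴺ \ U′) > 0. Then ∬_{ℝᴺ×ℝᴺ} |v(x)−v(y)| |φ(x)−φ(y)| J(x−y) dx dy < ∞. -/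
open MeasureTheory ENNReal Set

/-- Well-definedness of the bilinear form `𝒥(v,φ)` for `v, φ ∈ ℋ(U′)` with `φ`
supported in a set `U` at positive distance from `ℝᴺ \ U′`. -/
theorem bilinear_form_well_defined
    (N : ℕ) (U' : Set (EuclideanSpace ℝ (Fin N))) (hU' : IsOpen U')
    (J : EuclideanSpace ℝ (Fin N) → ℝ)
    (hJmeas : Measurable J) (hJnonneg : ∀ z, 0 ≤ J z)
    (hJeven : ∀ z, J (-z) = J z)
    (hJr : ∀ r > (0 : ℝ), ∫⁻ z in {z | r ≤ ‖z‖}, ENNReal.ofReal (J z) < ⊤)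
    (v φ : EuclideanSpace ℝ (Fin N) → ℝ)
    (hvm : Measurable v) (hφm : Measurable φ)
    (hvL2 : MemLp v 2 volume) (hφL2 : MemLp φ 2 volume)
    (hρv : ∫⁻ x in U', ∫⁻ y in U', ENNReal.ofReal ((v x - v y) ^ 2 * J (x - y)) < ⊤)
    (hρφ : ∫⁻ x in U', ∫⁻ y in U', ENNReal.ofReal ((φ x - φ y) ^ 2 * J (x - y)) < ⊤)
    (U : Set (EuclideanSpace ℝ (Fin N))) (hU : U ⊆ U')
    (hφ0 : ∀ x ∉ U, φ x = 0)
    (r : ℝ) (hr : 0 < r)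
    (hdist : ∀ x ∈ U, ∀ y ∉ U', r ≤ dist x y) :
    ∫⁻ x, ∫⁻ y, ENNReal.ofReal (|v x - v y| * |φ x - φ y| * J (x - y)) < ⊤ := by
  classical
  have hU'meas : MeasurableSet U' := hU'.measurableSet
  set S : Set (EuclideanSpace ℝ (Fin N)) := {z | r ≤ ‖z‖} with hSdef
  have hSmeas : MeasurableSet S := measurableSet_le measurable_const measurable_norm
  set fJ : EuclideanSpace ℝ (Fin N) → ℝ≥0∞ := S.indicator (fun z => ENNReal.ofReal (J z)) with hfJdef
  have hfJmeas : Measurable fJ := (hJmeas.ennreal_ofReal).indicator hSmeas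
  set K := ∫⁻ z, fJ z with hKdef
  have hK : K < ⊤ := by
    rw [hKdef, hfJdef, lintegral_indicator hSmeas]
    exact hJr r hr
  have hsub : Measurable (fun p : EuclideanSpace ℝ (Fin N) × EuclideanSpace ℝ (Fin N) => p.1 - p.2) := measurable_fst.sub measurable_snd
  -- key finiteness lemma for the "far off-diagonal" part
  have key : ∀ w : EuclideanSpace ℝ (Fin N) → ℝ, Measurable w → MemLp w 2 volume →
      ∫⁻ p : EuclideanSpace ℝ (Fin N) × EuclideanSpace ℝ (Fin N),
        S.indicator (fun _ => ENNReal.ofReal ((w p.1 - w p.2) ^ 2 * J (p.1 - p.2))) (p.1 - p.2) < ⊤ := by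
    intro w hwm hwL2
    have hIw : ∫⁻ x, ENNReal.ofReal (w x ^ 2) < ⊤ := hwL2.integrable_sq.lintegral_lt_top
    have hwm2 : Measurable fun x => ENNReal.ofReal (w x ^ 2) :=
      ((hwm.pow_const 2).ennreal_ofReal)
    have hAm : Measurable fun p : EuclideanSpace ℝ (Fin N) × EuclideanSpace ℝ (Fin N) => (2 * ENNReal.ofReal (w p.1 ^ 2)) * fJ (p.1 - p.2) :=
      ((measurable_const.mul (hwm2.comp measurable_fst))).mul (hfJmeas.comp hsub)
    have hBm : Measurable fun p : EuclideanSpace ℝ (Fin N) × EuclideanSpace ℝ (Fin N) => (2 * ENNReal.ofReal (w p.2 ^ 2)) * fJ (p.1 - p.2) :=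
      ((measurable_const.mul (hwm2.comp measurable_snd))).mul (hfJmeas.comp hsub)
    have hpt : ∀ p : EuclideanSpace ℝ (Fin N) × EuclideanSpace ℝ (Fin N),
        S.indicator (fun _ => ENNReal.ofReal ((w p.1 - w p.2) ^ 2 * J (p.1 - p.2))) (p.1 - p.2)
          ≤ (2 * ENNReal.ofReal (w p.1 ^ 2)) * fJ (p.1 - p.2)
            + (2 * ENNReal.ofReal (w p.2 ^ 2)) * fJ (p.1 - p.2) := by
      intro p
      by_cases hp : p.1 - p.2 ∈ S
      · rw [Set.indicator_of_mem hp, hfJdef, Set.indicator_of_mem hp]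
        have h1 : ENNReal.ofReal ((w p.1 - w p.2) ^ 2 * J (p.1 - p.2))
            ≤ ENNReal.ofReal ((2 * w p.1 ^ 2 + 2 * w p.2 ^ 2) * J (p.1 - p.2)) := by
          apply ENNReal.ofReal_le_ofReal
          have h0 := hJnonneg (p.1 - p.2)
          nlinarith [sq_nonneg (w p.1 + w p.2), sq_nonneg (w p.1 - w p.2)]
        refine h1.trans (le_of_eq ?_)
        rw [ENNReal.ofReal_mul (by positivity), ENNReal.ofReal_add (by positivity) (by positivity),
          ENNReal.ofReal_mul (by norm_num : (0:ℝ) ≤ 2),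
          ENNReal.ofReal_mul (by norm_num : (0:ℝ) ≤ 2), ENNReal.ofReal_ofNat, add_mul]
      · rw [Set.indicator_of_notMem hp, hfJdef, Set.indicator_of_notMem hp]
        simp
    have hA : (∫⁻ p : EuclideanSpace ℝ (Fin N) × EuclideanSpace ℝ (Fin N), (2 * ENNReal.ofReal (w p.1 ^ 2)) * fJ (p.1 - p.2)) < ⊤ := by
      rw [MeasureTheory.Measure.volume_eq_prod, lintegral_prod _ hAm.aemeasurable]
      have hin : ∀ x : EuclideanSpace ℝ (Fin N), (∫⁻ y, (2 * ENNReal.ofReal (w x ^ 2)) * fJ (x - y))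
          = 2 * K * ENNReal.ofReal (w x ^ 2) := by
        intro x
        rw [lintegral_const_mul _ (hfJmeas.comp' (measurable_const.sub measurable_id) : Measurable fun y => fJ (x - y))]
        rw [(MeasureTheory.Measure.measurePreserving_sub_left volume x).lintegral_comp hfJmeas]
        rw [← hKdef]; ring
      simp only [hin]
      rw [lintegral_const_mul _ hwm2]
      exact ENNReal.mul_lt_top (ENNReal.mul_lt_top (by norm_num) hK) hIw
    have hB : (∫⁻ p : EuclideanSpace ℝ (Fin N) × EuclideanSpace ℝ (Fin N), (2 * ENNReal.ofReal (w p.2 ^ 2)) * fJ (p.1 - p.2)) < ⊤ := by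
      rw [MeasureTheory.Measure.volume_eq_prod, lintegral_prod_symm _ hBm.aemeasurable]
      have hin : ∀ y : EuclideanSpace ℝ (Fin N), (∫⁻ x, (2 * ENNReal.ofReal (w y ^ 2)) * fJ (x - y))
          = 2 * K * ENNReal.ofReal (w y ^ 2) := by
        intro y
        rw [lintegral_const_mul _ (hfJmeas.comp' (measurable_id.sub measurable_const) : Measurable fun x => fJ (x - y))]
        rw [(MeasureTheory.measurePreserving_sub_right volume y).lintegral_comp hfJmeas]
        rw [← hKdef]; ring
      simp only [hin]
      rw [lintegral_const_mul _ hwm2]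
      exact ENNReal.mul_lt_top (ENNReal.mul_lt_top (by norm_num) hK) hIw
    calc ∫⁻ p : EuclideanSpace ℝ (Fin N) × EuclideanSpace ℝ (Fin N),
        S.indicator (fun _ => ENNReal.ofReal ((w p.1 - w p.2) ^ 2 * J (p.1 - p.2))) (p.1 - p.2)
        ≤ ∫⁻ p : EuclideanSpace ℝ (Fin N) × EuclideanSpace ℝ (Fin N), ((2 * ENNReal.ofReal (w p.1 ^ 2)) * fJ (p.1 - p.2)
            + (2 * ENNReal.ofReal (w p.2 ^ 2)) * fJ (p.1 - p.2)) := lintegral_mono hpt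
      _ = (∫⁻ p : EuclideanSpace ℝ (Fin N) × EuclideanSpace ℝ (Fin N), (2 * ENNReal.ofReal (w p.1 ^ 2)) * fJ (p.1 - p.2))
            + ∫⁻ p : EuclideanSpace ℝ (Fin N) × EuclideanSpace ℝ (Fin N), (2 * ENNReal.ofReal (w p.2 ^ 2)) * fJ (p.1 - p.2) :=
          lintegral_add_left hAm _
      _ < ⊤ := ENNReal.add_lt_top.2 ⟨hA, hB⟩
  -- main decomposition
  set Gv : EuclideanSpace ℝ (Fin N) × EuclideanSpace ℝ (Fin N) → ℝ≥0∞ := fun p => ENNReal.ofReal ((v p.1 - v p.2) ^ 2 * J (p.1 - p.2)) with hGvdef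
  set Gφ : EuclideanSpace ℝ (Fin N) × EuclideanSpace ℝ (Fin N) → ℝ≥0∞ := fun p => ENNReal.ofReal ((φ p.1 - φ p.2) ^ 2 * J (p.1 - p.2)) with hGφdef
  have hGvm : Measurable Gv := by
    apply Measurable.ennreal_ofReal
    exact (((hvm.comp measurable_fst).sub (hvm.comp measurable_snd)).pow_const 2).mul
      (hJmeas.comp hsub)
  have hGφm : Measurable Gφ := by
    apply Measurable.ennreal_ofReal
    exact (((hφm.comp measurable_fst).sub (hφm.comp measurable_snd)).pow_const 2).mul
      (hJmeas.comp hsub)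
  set T1 : EuclideanSpace ℝ (Fin N) × EuclideanSpace ℝ (Fin N) → ℝ≥0∞ := (U' ×ˢ U').indicator (fun p => Gv p + Gφ p) with hT1def
  set T2v : EuclideanSpace ℝ (Fin N) × EuclideanSpace ℝ (Fin N) → ℝ≥0∞ :=
    fun p => S.indicator (fun _ => ENNReal.ofReal ((v p.1 - v p.2) ^ 2 * J (p.1 - p.2))) (p.1 - p.2)
    with hT2vdef
  set T2φ : EuclideanSpace ℝ (Fin N) × EuclideanSpace ℝ (Fin N) → ℝ≥0∞ :=
    fun p => S.indicator (fun _ => ENNReal.ofReal ((φ p.1 - φ p.2) ^ 2 * J (p.1 - p.2))) (p.1 - p.2)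
    with hT2φdef
  have hT1m : Measurable T1 := (hGvm.add hGφm).indicator (hU'meas.prod hU'meas)
  have hT2vm : Measurable T2v := by
    have : T2v = ((fun p : EuclideanSpace ℝ (Fin N) × EuclideanSpace ℝ (Fin N) => p.1 - p.2) ⁻¹' S).indicator Gv := by
      ext p; by_cases hp : p.1 - p.2 ∈ S <;>
        simp [hT2vdef, hGvdef, hp, Set.indicator_of_mem, Set.indicator_of_notMem]
    rw [this]; exact hGvm.indicator (hsub hSmeas)
  have hT2φm : Measurable T2φ := by
    have : T2φ = ((fun p : EuclideanSpace ℝ (Fin N) × EuclideanSpace ℝ (Fin N) => p.1 - p.2) ⁻¹' S).indicator Gφ := by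
      ext p; by_cases hp : p.1 - p.2 ∈ S <;>
        simp [hT2φdef, hGφdef, hp, Set.indicator_of_mem, Set.indicator_of_notMem]
    rw [this]; exact hGφm.indicator (hsub hSmeas)
  -- pointwise bound
  have hbound : ∀ p : EuclideanSpace ℝ (Fin N) × EuclideanSpace ℝ (Fin N),
      ENNReal.ofReal (|v p.1 - v p.2| * |φ p.1 - φ p.2| * J (p.1 - p.2))
        ≤ T1 p + (T2v p + T2φ p) := by
    rintro ⟨x, y⟩
    have hFG : ENNReal.ofReal (|v x - v y| * |φ x - φ y| * J (x - y))
        ≤ Gv (x, y) + Gφ (x, y) := by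
      have h1 : Gv (x, y) + Gφ (x, y)
          = ENNReal.ofReal ((v x - v y) ^ 2 * J (x - y) + (φ x - φ y) ^ 2 * J (x - y)) := by
        rw [hGvdef, hGφdef]
        exact (ENNReal.ofReal_add (mul_nonneg (sq_nonneg _) (hJnonneg _))
          (mul_nonneg (sq_nonneg _) (hJnonneg _))).symm
      rw [h1]
      apply ENNReal.ofReal_le_ofReal
      have h0 := hJnonneg (x - y)
      rw [← add_mul]
      apply mul_le_mul_of_nonneg_right _ h0
      nlinarith [sq_abs (v x - v y), sq_abs (φ x - φ y), sq_nonneg (|v x - v y| - |φ x - φ y|),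
        abs_nonneg (v x - v y), abs_nonneg (φ x - φ y)]
    by_cases hxy : x ∈ U' ∧ y ∈ U'
    · have hT1 : T1 (x, y) = Gv (x, y) + Gφ (x, y) := by
        rw [hT1def, Set.indicator_of_mem (Set.mk_mem_prod hxy.1 hxy.2)]
      calc ENNReal.ofReal (|v x - v y| * |φ x - φ y| * J (x - y))
          ≤ Gv (x, y) + Gφ (x, y) := hFG
        _ = T1 (x, y) := hT1.symm
        _ ≤ T1 (x, y) + (T2v (x, y) + T2φ (x, y)) := le_self_add
    · by_cases hφxy : φ x = φ y
      · have : φ x - φ y = 0 := sub_eq_zero_of_eq hφxy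
        simp [this]
      · -- the supports force x - y ∈ S
        have hS : x - y ∈ S := by
          have hx' : x ∉ U' ∨ y ∉ U' := by tauto
          rcases hx' with hx' | hy'
          · have hxU : x ∉ U := fun h => hx' (hU h)
            have hφx : φ x = 0 := hφ0 x hxU
            have hyU : y ∈ U := by
              by_contra hyU
              exact hφxy (by rw [hφx, hφ0 y hyU])
            have := hdist y hyU x hx'
            rw [hSdef]
            simp only [Set.mem_setOf_eq]
            rwa [dist_comm, dist_eq_norm] at this
          · have hyU : y ∉ U := fun h => hy' (hU h)
            have hφy : φ y = 0 := hφ0 y hyU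
            have hxU : x ∈ U := by
              by_contra hxU
              exact hφxy (by rw [hφy, hφ0 x hxU])
            have := hdist x hxU y hy'
            rw [hSdef]
            simp only [Set.mem_setOf_eq]
            rwa [dist_eq_norm] at this
        have hT2 : T2v (x, y) + T2φ (x, y) = Gv (x, y) + Gφ (x, y) := by
          rw [hT2vdef, hT2φdef]
          simp only
          rw [Set.indicator_of_mem hS, Set.indicator_of_mem hS]
        calc ENNReal.ofReal (|v x - v y| * |φ x - φ y| * J (x - y))
            ≤ Gv (x, y) + Gφ (x, y) := hFG
          _ = T2v (x, y) + T2φ (x, y) := hT2.symm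
          _ ≤ T1 (x, y) + (T2v (x, y) + T2φ (x, y)) := le_add_self
  -- the near-diagonal part
  have hT1fin : (∫⁻ p : EuclideanSpace ℝ (Fin N) × EuclideanSpace ℝ (Fin N), T1 p) < ⊤ := by
    rw [hT1def, lintegral_indicator (hU'meas.prod hU'meas)]
    rw [MeasureTheory.Measure.volume_eq_prod, ← Measure.prod_restrict]
    rw [lintegral_prod (fun p => Gv p + Gφ p) ((hGvm.add hGφm).aemeasurable)]
    have hsplit : ∀ x : EuclideanSpace ℝ (Fin N),
        (∫⁻ y in U', (Gv (x, y) + Gφ (x, y))) = (∫⁻ y in U', Gv (x, y)) + ∫⁻ y in U', Gφ (x, y) :=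
      fun x => lintegral_add_left (hGvm.comp measurable_prodMk_left) _
    simp only [hsplit]
    rw [lintegral_add_left (hGvm.lintegral_prod_right')]
    exact ENNReal.add_lt_top.2 ⟨hρv, hρφ⟩
  calc ∫⁻ x, ∫⁻ y, ENNReal.ofReal (|v x - v y| * |φ x - φ y| * J (x - y))
      = ∫⁻ p : EuclideanSpace ℝ (Fin N) × EuclideanSpace ℝ (Fin N),
          ENNReal.ofReal (|v p.1 - v p.2| * |φ p.1 - φ p.2| * J (p.1 - p.2)) := by
        rw [MeasureTheory.Measure.volume_eq_prod, lintegral_prod _ ?_]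
        exact ((((hvm.comp measurable_fst).sub (hvm.comp measurable_snd)).abs.mul
          ((hφm.comp measurable_fst).sub (hφm.comp measurable_snd)).abs).mul
          (hJmeas.comp hsub)).ennreal_ofReal.aemeasurable
    _ ≤ ∫⁻ p : EuclideanSpace ℝ (Fin N) × EuclideanSpace ℝ (Fin N), (T1 p + (T2v p + T2φ p)) :=
        lintegral_mono hbound
    _ = (∫⁻ p : EuclideanSpace ℝ (Fin N) × EuclideanSpace ℝ (Fin N), T1 p)
          + ∫⁻ p : EuclideanSpace ℝ (Fin N) × EuclideanSpace ℝ (Fin N), (T2v p + T2φ p) :=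
        lintegral_add_left hT1m _
    _ = (∫⁻ p : EuclideanSpace ℝ (Fin N) × EuclideanSpace ℝ (Fin N), T1 p)
          + ((∫⁻ p : EuclideanSpace ℝ (Fin N) × EuclideanSpace ℝ (Fin N), T2v p)
            + ∫⁻ p : EuclideanSpace ℝ (Fin N) × EuclideanSpace ℝ (Fin N), T2φ p) := by
        rw [lintegral_add_left hT2vm]
    _ < ⊤ := by
        refine ENNReal.add_lt_top.2 ⟨hT1fin, ENNReal.add_lt_top.2 ⟨?_, ?_⟩⟩
        · exact key v hvm hvL2
        · exact key φ hφm hφL2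
end
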